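/- arXiv:2306.11183 — 8 statements merged into one kernel-verified Lean document; each statement's English description precedes it below -/
import Mathlib

section
/- Let a ∈ F_q^*, let p be a prime with p ∣ (q − 1), and let t be a positive integer such that X^t − a is irreducible over F_q. Assume further that 4 ∤ tp or q ≡ 1 (mod 4). Then X^{tp} − a is irreducible over F_q if and only if p · ord(a) does not divide q − 1. -/
open Polynomial

lemma aux_pow_iff {G : Type*} [CommGroup G] [Fintype G] [IsCyclic G] {p : ℕ} (hp : p.Prime)
    (hpn : p ∣ Fintype.card G) (u : G) :
    (∃ v : G, v ^ p = u) ↔ p * orderOf u ∣ Fintype.card G := by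
  constructor
  · rintro ⟨v, rfl⟩
    by_cases hpv : p ∣ orderOf v
    · rw [orderOf_pow, Nat.gcd_eq_right hpv, Nat.mul_div_cancel' hpv]
      exact orderOf_dvd_card
    · have hco : Nat.Coprime p (orderOf v) := hp.coprime_iff_not_dvd.mpr hpv
      rw [orderOf_pow, Nat.Coprime.gcd_eq_one hco.symm, Nat.div_one]
      exact hco.mul_dvd_of_dvd_of_dvd hpn orderOf_dvd_card
  · intro h
    obtain ⟨g, hg⟩ := IsCyclic.exists_generator (α := G)
    obtain ⟨k, hk⟩ := mem_powers_iff_mem_zpowers.mpr (hg u)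
    have hn : orderOf g = Fintype.card G := (orderOf_eq_card_of_forall_mem_zpowers hg).trans Nat.card_eq_fintype_card
    have hnpos : 0 < Fintype.card G := Fintype.card_pos
    subst hk
    rw [orderOf_pow, hn] at h
    set n := Fintype.card G with hndef
    set d := Nat.gcd n k with hd
    have hdn : d ∣ n := Nat.gcd_dvd_left n k
    have hdpos : 0 < d := Nat.gcd_pos_of_pos_left k hnpos
    have hq : n = d * (n / d) := (Nat.mul_div_cancel' hdn).symm
    have hpd : p ∣ d := by
      have h2 : p * (n / d) ∣ d * (n / d) := by rw [← hq]; exact h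
      have hq2 : 0 < n / d := Nat.div_pos (Nat.le_of_dvd hnpos hdn) hdpos
      exact (Nat.mul_dvd_mul_iff_right hq2).mp h2
    obtain ⟨m, hm⟩ := hpd.trans (Nat.gcd_dvd_right n k)
    exact ⟨g ^ m, by rw [← pow_mul, mul_comm m p, ← hm]⟩

lemma aux_sign {F : Type*} [Field F] [Fintype F] {q : ℕ} (hF : Fintype.card F = q)
    {p t : ℕ} (hp : p.Prime) (h4 : ¬ 4 ∣ t * p ∨ q % 4 = 1)
    {a c : F} (hc : c ^ p = (-1) ^ (t + 1) * a) (hnp : ∀ b : F, b ^ p ≠ a) : False := by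
  by_cases hp2 : p = 2
  · subst hp2
    rcases Nat.even_or_odd t with hte | hto
    · have h41 : q % 4 = 1 := by
        rcases h4 with h | h
        · exact absurd (by obtain ⟨s, rfl⟩ := hte; exact ⟨s, by ring⟩) h
        · exact h
      have hsq : IsSquare (-1 : F) := by
        rw [FiniteField.isSquare_neg_one_iff, hF, h41]; omega
      obtain ⟨d, hd⟩ := hsq
      have hneg : (-1 : F) ^ (t + 1) = -1 := by
        rw [pow_succ, Even.neg_one_pow hte, one_mul]
      apply hnp (d * c)
      rw [mul_pow, hc, hneg, show d ^ 2 = d * d from sq d, ← hd]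
      ring
    · have hneg : (-1 : F) ^ (t + 1) = 1 := Even.neg_one_pow hto.add_one
      exact hnp c (by rw [hc, hneg, one_mul])
  · have hodd : Odd p := hp.odd_of_ne_two hp2
    apply hnp ((-1) ^ (t + 1) * c)
    rw [mul_pow, hc, ← pow_mul]
    rcases Nat.even_or_odd (t + 1) with h1 | h1
    · rw [Even.neg_one_pow h1, Even.neg_one_pow (h1.mul_right p), one_mul, one_mul]
    · rw [Odd.neg_one_pow h1, Odd.neg_one_pow (h1.mul hodd), neg_one_mul, neg_one_mul, neg_neg]

/-- Let `a ∈ F_q^*`, `p` a prime with `p ∣ q - 1`, and `t` a positive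
integer such that `X ^ t - a` is irreducible over `F_q`.  Assume `4 ∤ t p` or
`q ≡ 1 (mod 4)`.  Then `X ^ (t p) - a` is irreducible over `F_q` if and only if
`p * ord a` does not divide `q - 1`. -/
theorem stmt4 (q : ℕ) (F : Type*) [Field F] [Fintype F] (hF : Fintype.card F = q)
    (a : F) (ha : a ≠ 0)
    (p : ℕ) (hp : p.Prime) (hpq : p ∣ q - 1)
    (t : ℕ) (ht : 0 < t) (hirr : Irreducible (X ^ t - C a))
    (h4 : ¬ 4 ∣ t * p ∨ q % 4 = 1) :
    Irreducible (X ^ (t * p) - C a) ↔ ¬ p * orderOf a ∣ q - 1 := by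
  classical
  have hcard : Fintype.card Fˣ = q - 1 := by rw [Fintype.card_units, hF]
  set ua : Fˣ := Units.mk0 a ha with hua
  have hord : orderOf a = orderOf ua := by
    rw [hua, ← orderOf_units, Units.val_mk0]
  have hkey : (∃ b : F, b ^ p = a) ↔ p * orderOf a ∣ q - 1 := by
    rw [hord, ← hcard]
    rw [← aux_pow_iff hp (hcard ▸ hpq) ua]
    constructor
    · rintro ⟨b, hb⟩
      have hb0 : b ≠ 0 := by
        rintro rfl; exact ha (by rw [← hb, zero_pow hp.ne_zero])
      exact ⟨Units.mk0 b hb0, by ext; simp [hua, hb]⟩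
    · rintro ⟨v, hv⟩
      exact ⟨(v : F), by rw [← Units.val_pow_eq_pow_val, hv, hua, Units.val_mk0]⟩
  constructor
  · intro h hdvd
    obtain ⟨b, hb⟩ := hkey.mpr hdvd
    exact pow_ne_of_irreducible_X_pow_sub_C h ⟨t, mul_comm t p⟩ hp.ne_one b hb
  · intro hnd
    have hnp : ∀ b : F, b ^ p ≠ a := fun b hb => hnd (hkey.mp ⟨b, hb⟩)
    rw [mul_comm]
    apply X_pow_mul_sub_C_irreducible hirr
    intro E _ _ x hx
    have hint : IsIntegral F x := not_not.mp fun h ↦ by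
      simpa only [degree_zero, degree_X_pow_sub_C ht,
        WithBot.natCast_ne_bot] using congr_arg degree (hx.symm.trans (dif_neg h))
    apply X_pow_sub_C_irreducible_of_prime hp
    intro b hb
    have key2 : (Algebra.norm F b) ^ p = (-1) ^ (t + 1) * a := by
      rw [← map_pow, hb, ← IntermediateField.adjoin.powerBasis_gen hint,
        Algebra.PowerBasis.norm_gen_eq_coeff_zero_minpoly]
      simp only [IntermediateField.adjoin.powerBasis_dim, IntermediateField.adjoin.powerBasis_gen, IntermediateField.minpoly_gen, hx,
        coeff_sub, coeff_X_pow, coeff_C_zero, natDegree_X_pow_sub_C, if_neg ht.ne, pow_succ]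
      ring
    exact aux_sign hF hp h4 key2 hnp
end

section
/- Let a ∈ F_q^*, let p be a prime with p ∣ (q − 1), and let t be a positive integer such that X^t − a is irreducible over F_q. Assume further that 4 ∤ tp or q ≡ 1 (mod 4). If p divides t, then X^{tp} − a is irreducible over F_q. -/
open Polynomial

/-- Let `a ∈ F_q^*`, `p` a prime with `p ∣ q - 1`, and `t` a positive
integer such that `X ^ t - a` is irreducible over `F_q`.  Assume `4 ∤ t p` or
`q ≡ 1 (mod 4)`.  If `p` divides `t`, then `X ^ (t p) - a` is irreducible over `F_q`. -/
theorem stmt5 (q : ℕ) (F : Type*) [Field F] [Fintype F] (hF : Fintype.card F = q)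
    (a : F) (ha : a ≠ 0)
    (p : ℕ) (hp : p.Prime) (hpq : p ∣ q - 1)
    (t : ℕ) (ht : 0 < t) (hirr : Irreducible (X ^ t - C a))
    (h4 : ¬ 4 ∣ t * p ∨ q % 4 = 1)
    (hpt : p ∣ t) :
    Irreducible (X ^ (t * p) - C a) := by
  have hane : ∀ b : F, b ^ p ≠ a :=
    pow_ne_of_irreducible_X_pow_sub_C hirr hpt hp.ne_one
  rw [mul_comm]
  apply X_pow_mul_sub_C_irreducible hirr
  intro E _ _ x hx
  have hint : IsIntegral F x := not_not.mp fun h ↦ by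
    simpa only [degree_zero, degree_X_pow_sub_C ht,
      WithBot.natCast_ne_bot] using congr_arg degree (hx.symm.trans (dif_neg h))
  apply X_pow_sub_C_irreducible_of_prime hp
  intro b hb
  have hnorm : Algebra.norm F (IntermediateField.AdjoinSimple.gen F x)
      = (-1) ^ t * (-a) := by
    rw [← IntermediateField.adjoin.powerBasis_gen hint,
      Algebra.PowerBasis.norm_gen_eq_coeff_zero_minpoly]
    simp [IntermediateField.minpoly_gen, hx, ht.ne', ht.ne]
  have key : (Algebra.norm F b) ^ p = (-1) ^ t * (-a) := by
    rw [← map_pow, hb, hnorm]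
  rcases Nat.even_or_odd t with hte | hto
  · -- t even : norm gen = -a
    rw [hte.neg_one_pow, one_mul] at key
    rcases hp.eq_two_or_odd' with rfl | hpodd
    · -- p = 2, so 4 ∣ t * p
      obtain ⟨k, hk⟩ := hte
      have h44 : (4 : ℕ) ∣ t * 2 := ⟨k, by omega⟩
      have hq4 : q % 4 = 1 := h4.resolve_left (by exact fun h ↦ h h44)
      have hsq : IsSquare (-1 : F) := by
        rw [FiniteField.isSquare_neg_one_iff, hF, hq4]
        omega
      obtain ⟨c, hc⟩ := hsq
      exact hane (c * Algebra.norm F b) (by rw [mul_pow, pow_two, ← hc, key]; ring)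
    · -- p odd
      exact hane (-(Algebra.norm F b)) (by rw [hpodd.neg_pow, key]; ring)
  · -- t odd : norm gen = a
    rw [hto.neg_one_pow] at key
    exact hane (Algebra.norm F b) (by rw [key]; ring)
end

section
/- Let a ∈ F_q^*, let p be a prime with p ∣ (q − 1), and let t be a positive integer such that X^t − a is irreducible over F_q; assume 4 ∤ tp or q ≡ 1 (mod 4), and assume p · ord(a) ∣ (q − 1). Then there exists b ∈ F_q with b^p = a such that the factorization of X^{tp} − a into monic irreducible factors over F_q is X^{tp} − a = ∏_{j=0}^{p−1} (X^t − ζ_p^j b). Moreover: (i) if p ∤ ord(a), then b = a^r and ord(b) = ord(a), where r = 1 if a = 1 and otherwise r·p ≡ 1 (mod ord(a)); (ii) if p ∣ ord(a), then ord(b) = p · ord(a); and in both cases ord(ζ_p^j b) = p · ord(a) for all 1 ≤ j ≤ p−1. -/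
open Polynomial

/-- Key irreducibility lemma: if `X^t - a` is irreducible and `c^p = a`, then `X^t - c`
is irreducible. -/
lemma aux_irred {F : Type*} [Field F] {t p : ℕ} (ht : 0 < t) {a c : F} (hc : c ^ p = a)
    (hirr : Irreducible (X ^ t - C a)) : Irreducible (X ^ t - C c) := by
  set P : Polynomial F := X ^ t - C c with hP
  have hPm : P.Monic := monic_X_pow_sub_C _ ht.ne'
  have hPdeg : P.natDegree = t := by simp [hP, natDegree_X_pow_sub_C]
  have hP0 : P ≠ 0 := hPm.ne_zero
  have hPnu : ¬ IsUnit P := by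
    apply Polynomial.not_isUnit_of_natDegree_pos
    omega
  obtain ⟨g, hgi, hgd⟩ := WfDvdMonoid.exists_irreducible_factor hPnu hP0
  haveI : Fact (Irreducible g) := ⟨hgi⟩
  have hg0 : g ≠ 0 := hgi.ne_zero
  set K := AdjoinRoot g
  set β : K := AdjoinRoot.root g
  have hβ : β ^ t = algebraMap F K c := by
    have h0 : (Polynomial.aeval β) P = 0 := by
      rw [AdjoinRoot.aeval_eq, AdjoinRoot.mk_eq_zero]
      exact hgd
    have : β ^ t - algebraMap F K c = 0 := by simpa [hP] using h0
    linear_combination this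
  have hγ : (β ^ p) ^ t = algebraMap F K a := by
    rw [← pow_mul, mul_comm, pow_mul, hβ, ← map_pow, hc]
  have hmin : minpoly F (β ^ p) = X ^ t - C a := by
    refine (minpoly.eq_of_irreducible_of_monic hirr ?_ (monic_X_pow_sub_C _ ht.ne')).symm
    simp [hγ]
  haveI : Module.Finite F K := (AdjoinRoot.powerBasis hg0).finite
  have hfr : Module.finrank F K = g.natDegree := by
    rw [(AdjoinRoot.powerBasis hg0).finrank]; rfl
  have hint : IsIntegral F (β ^ p) := IsIntegral.of_finite F _
  have hdvd : t ∣ g.natDegree := by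
    have := minpoly.degree_dvd hint
    rwa [hmin, natDegree_X_pow_sub_C, hfr] at this
  have hle : g.natDegree ≤ t := hPdeg ▸ natDegree_le_of_dvd hgd hP0
  have hgt : 0 < g.natDegree := hgi.natDegree_pos
  have heq : g.natDegree = t := le_antisymm hle (Nat.le_of_dvd hgt hdvd)
  obtain ⟨h, hh⟩ := hgd
  have hh0 : h ≠ 0 := by rintro rfl; simp at hh; exact hP0 hh
  have hhdeg : h.natDegree = 0 := by
    have := natDegree_mul hg0 hh0
    rw [← hh, hPdeg, heq] at this
    omega
  have hu : IsUnit h := by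
    have hhc := Polynomial.eq_C_of_natDegree_eq_zero hhdeg
    rw [Polynomial.isUnit_iff]
    refine ⟨h.coeff 0, isUnit_iff_ne_zero.mpr ?_, hhc.symm⟩
    intro h0
    rw [h0, map_zero] at hhc
    exact hh0 hhc
  exact (Associated.irreducible ⟨hu.unit, by rw [hh]; rfl⟩ hgi)

/-- In a finite cyclic group, if `p * orderOf u` divides the order of the group,
then `u` has a `p`-th root. -/
lemma aux_root {G : Type*} [Group G] [Finite G] [IsCyclic G] {p : ℕ} (hp : 0 < p)
    {u : G} (h : p * orderOf u ∣ Nat.card G) : ∃ v : G, v ^ p = u := by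
  classical
  obtain ⟨g, hg⟩ := IsCyclic.exists_generator (α := G)
  obtain ⟨k, hk⟩ := mem_powers_iff_mem_zpowers.mpr (hg u)
  have hk : g ^ k = u := hk
  have hog : orderOf g = Nat.card G := orderOf_eq_card_of_forall_mem_zpowers hg
  set n := Nat.card G with hn'
  have hn : 0 < n := Nat.card_pos
  have hu : orderOf u = n / Nat.gcd n k := by
    rw [← hk, orderOf_pow, hog]
  set d := Nat.gcd n k with hd
  have hdn : d ∣ n := Nat.gcd_dvd_left _ _
  have hdk : d ∣ k := Nat.gcd_dvd_right _ _
  have hdpos : 0 < d := Nat.gcd_pos_of_pos_left _ hn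
  have hq : 0 < n / d := Nat.div_pos (Nat.le_of_dvd hn hdn) hdpos
  have hpd : p ∣ d := by
    have h2 : p * (n / d) ∣ d * (n / d) := by
      rw [Nat.mul_div_cancel' hdn]
      rw [hu] at h
      exact h
    exact (Nat.mul_dvd_mul_iff_right hq).mp h2
  have hpk : p ∣ k := hpd.trans hdk
  exact ⟨g ^ (k / p), by rw [← pow_mul, Nat.div_mul_cancel hpk]; exact hk⟩

/-- In a finite group, if `v ^ p = u` with `p` prime dividing `orderOf u`, then
`orderOf v = p * orderOf u`. -/
lemma aux_ord {G : Type*} [Group G] [Finite G] {p : ℕ} (hp : p.Prime) {u v : G}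
    (hv : v ^ p = u) (hpu : p ∣ orderOf u) : orderOf v = p * orderOf u := by
  have h : orderOf u = orderOf v / Nat.gcd (orderOf v) p := by
    rw [← hv, orderOf_pow]
  by_cases hpv : p ∣ orderOf v
  · have hg : Nat.gcd (orderOf v) p = p := Nat.gcd_eq_right hpv
    rw [hg] at h
    rw [h, Nat.mul_div_cancel' hpv]
  · have hco : Nat.Coprime (orderOf v) p := (hp.coprime_iff_not_dvd.mpr hpv).symm
    rw [Nat.Coprime.gcd_eq_one hco, Nat.div_one] at h
    exact absurd (h ▸ hpu) hpv


/-- Let `a ∈ F_q^*`, `p` a prime with `p ∣ q - 1`, and `t` a positive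
integer such that `X ^ t - a` is irreducible over `F_q`; assume `4 ∤ t p` or
`q ≡ 1 (mod 4)`, and assume `p * ord a ∣ q - 1`.  Then there is `b ∈ F_q` with `b ^ p = a`
such that `X ^ (t p) - a = ∏_{j=0}^{p-1} (X ^ t - ζ_p^j b)` is the factorization into
monic irreducible factors over `F_q`.  Moreover: (i) if `p ∤ ord a`, then `b = a ^ r` and
`ord b = ord a`, where `r = 1` if `a = 1` and otherwise `r p ≡ 1 (mod ord a)`;
(ii) if `p ∣ ord a`, then `ord b = p * ord a`; and in both cases
`ord (ζ_p^j b) = p * ord a` for all `1 ≤ j ≤ p - 1`. -/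
theorem stmt6 (q : ℕ) (F : Type*) [Field F] [Fintype F] (hF : Fintype.card F = q)
    (a : F) (ha : a ≠ 0)
    (p : ℕ) (hp : p.Prime) (hpq : p ∣ q - 1)
    (t : ℕ) (ht : 0 < t) (hirr : Irreducible (X ^ t - C a))
    (h4 : ¬ 4 ∣ t * p ∨ q % 4 = 1)
    (hdvd : p * orderOf a ∣ q - 1)
    (ζ : F) (hζ : IsPrimitiveRoot ζ p) :
    ∃ b : F, b ^ p = a ∧
      (X ^ (t * p) - C a : Polynomial F) =
        (∏ j ∈ Finset.range p, (X ^ t - C (ζ ^ j * b))) ∧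
      (∀ j ∈ Finset.range p,
        (X ^ t - C (ζ ^ j * b)).Monic ∧ Irreducible (X ^ t - C (ζ ^ j * b))) ∧
      (¬ p ∣ orderOf a →
        ∃ r : ℕ, 0 < r ∧ b = a ^ r ∧ orderOf b = orderOf a ∧
          (a = 1 → r = 1) ∧ (a ≠ 1 → r * p ≡ 1 [MOD orderOf a])) ∧
      (p ∣ orderOf a → orderOf b = p * orderOf a) ∧
      (∀ j : ℕ, 1 ≤ j → j ≤ p - 1 → orderOf (ζ ^ j * b) = p * orderOf a) := by
  set e := orderOf a with he
  set ua : Fˣ := Units.mk0 a ha with hua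
  have hua_coe : (ua : F) = a := rfl
  have h_ord_ua : orderOf ua = e := by rw [he, ← hua_coe, orderOf_units]
  have he_pos : 0 < e := by rw [← h_ord_ua]; exact orderOf_pos ua
  have hζ0 : ζ ≠ 0 := hζ.ne_zero hp.ne_zero
  set uζ : Fˣ := Units.mk0 ζ hζ0 with huζ
  have huζ_coe : (uζ : F) = ζ := rfl
  have h_ord_uζ : orderOf uζ = p := by rw [← orderOf_units (y := uζ)]; exact hζ.eq_orderOf.symm
  have hζp : ζ ^ p = 1 := hζ.pow_eq_one
  have huζp : uζ ^ p = 1 := by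
    ext
    rw [Units.val_pow_eq_pow_val, huζ_coe, hζp, Units.val_one]
  -- common part: factorization and irreducibility
  have factor_part : ∀ b : F, b ^ p = a →
      ((X ^ (t * p) - C a : Polynomial F) =
        ∏ j ∈ Finset.range p, (X ^ t - C (ζ ^ j * b))) ∧
      (∀ j ∈ Finset.range p,
        (X ^ t - C (ζ ^ j * b)).Monic ∧ Irreducible (X ^ t - C (ζ ^ j * b))) := by
    intro b hb
    have hcj : ∀ j : ℕ, (ζ ^ j * b) ^ p = a := by
      intro j
      rw [mul_pow, ← pow_mul, mul_comm j p, pow_mul, hζp, one_pow, one_mul, hb]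
    constructor
    · have h1 : (X ^ p - C a : Polynomial F) =
          ∏ j ∈ Finset.range p, (X - C (ζ ^ j * b)) :=
        X_pow_sub_C_eq_prod hζ hp.pos hb
      have h2 : ((X ^ p - C a : Polynomial F)).comp (X ^ t) = X ^ (t * p) - C a := by
        rw [sub_comp, pow_comp, X_comp, C_comp, ← pow_mul]
      rw [← h2, h1, prod_comp]
      refine Finset.prod_congr rfl fun j _ => ?_
      rw [sub_comp, X_comp, C_comp]
    · intro j _
      exact ⟨monic_X_pow_sub_C _ ht.ne', aux_irred ht (hcj j) hirr⟩
  have hpj_cop : ∀ j : ℕ, 1 ≤ j → j ≤ p - 1 → orderOf (uζ ^ j) = p := by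
    intro j hj1 hj2
    have hp2 := hp.two_le
    have hpj : ¬ p ∣ j := by
      intro hdj
      have := Nat.le_of_dvd (by omega) hdj
      omega
    rw [orderOf_pow, h_ord_uζ, Nat.Coprime.gcd_eq_one (hp.coprime_iff_not_dvd.mpr hpj),
      Nat.div_one]
  by_cases hpa : p ∣ e
  · -- case (ii): p ∣ orderOf a
    have hroot : p * orderOf ua ∣ Nat.card Fˣ := by
      rw [h_ord_ua, Nat.card_units, Nat.card_eq_fintype_card, hF]
      exact hdvd
    obtain ⟨ub, hub⟩ := aux_root hp.pos hroot
    set b : F := (ub : F) with hbdef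
    have hb : b ^ p = a := by
      rw [hbdef, ← Units.val_pow_eq_pow_val, hub, hua_coe]
    have hordub : orderOf ub = p * e := by
      have := aux_ord hp hub (by rwa [h_ord_ua])
      rwa [h_ord_ua] at this
    obtain ⟨hprod, hfac⟩ := factor_part b hb
    refine ⟨b, hb, hprod, hfac, fun h => absurd hpa h, fun _ => ?_, ?_⟩
    · rw [hbdef, orderOf_units, hordub]
    · intro j hj1 hj2
      have hc : (uζ ^ j * ub) ^ p = ua := by
        rw [mul_pow, ← pow_mul, mul_comm j p, pow_mul, huζp, one_pow, one_mul, hub]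
      have hord : orderOf (uζ ^ j * ub) = p * e := by
        have := aux_ord hp hc (by rwa [h_ord_ua])
        rwa [h_ord_ua] at this
      have hcoe : ζ ^ j * b = ((uζ ^ j * ub : Fˣ) : F) := by
        rw [Units.val_mul, Units.val_pow_eq_pow_val, huζ_coe, hbdef]
      rw [hcoe, orderOf_units, hord]
  · -- case (i): ¬ p ∣ orderOf a
    have hco : Nat.Coprime p e := hp.coprime_iff_not_dvd.mpr hpa
    obtain ⟨r, hr_pos, hr1, hrmod⟩ :
        ∃ r : ℕ, 0 < r ∧ (a = 1 → r = 1) ∧ (a ≠ 1 → r * p ≡ 1 [MOD e]) := by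
      by_cases ha1 : a = 1
      · exact ⟨1, one_pos, fun _ => rfl, fun h => absurd ha1 h⟩
      · have he1 : 1 < e := by
          have : e ≠ 1 := fun h' => ha1 (orderOf_eq_one_iff.mp (he ▸ h'))
          omega
        obtain ⟨m, -, hm⟩ := Nat.exists_mul_mod_eq_one_of_coprime hco he1
        refine ⟨m, ?_, fun h => absurd h ha1, fun _ => ?_⟩
        · rcases Nat.eq_zero_or_pos m with rfl | h
          · simp at hm
          · exact h
        · show m * p % e = 1 % e
          rw [mul_comm, hm, Nat.mod_eq_of_lt he1]
    have hrp1 : a ^ (r * p) = a := by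
      by_cases ha1 : a = 1
      · rw [ha1, one_pow]
      · have hmod := hrmod ha1
        have hu2 : ua ^ (r * p) = ua ^ 1 := pow_eq_pow_iff_modEq.mpr (by rwa [h_ord_ua])
        calc a ^ (r * p) = ((ua ^ (r * p) : Fˣ) : F) := by
              rw [Units.val_pow_eq_pow_val, hua_coe]
          _ = ((ua ^ 1 : Fˣ) : F) := by rw [hu2]
          _ = a := by rw [pow_one, hua_coe]
    have hcop : Nat.Coprime e r := by
      by_cases ha1 : a = 1
      · have h1 : e = 1 := by rw [he, ha1, orderOf_one]
        rw [h1]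
        exact Nat.coprime_one_left _
      · have hmod := hrmod ha1
        have hB : (↑(e.gcd r) : ℤ) ∣ (1 - (r : ℤ) * p) := by
          refine dvd_trans (Int.natCast_dvd_natCast.mpr (Nat.gcd_dvd_left e r)) ?_
          have := hmod.dvd
          push_cast at this ⊢
          exact this
        have hA : (↑(e.gcd r) : ℤ) ∣ ((r : ℤ) * p) :=
          Dvd.dvd.mul_right (Int.natCast_dvd_natCast.mpr (Nat.gcd_dvd_right e r)) _
        have h1 : (↑(e.gcd r) : ℤ) ∣ 1 := by
          have := dvd_add hB hA
          simpa using this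
        have : e.gcd r ∣ 1 := by exact_mod_cast h1
        exact Nat.dvd_one.mp this
    set b : F := a ^ r with hbdef
    set ub : Fˣ := ua ^ r with hubdef
    have hub_coe : (ub : F) = b := by
      rw [hubdef, Units.val_pow_eq_pow_val, hua_coe]
    have hb : b ^ p = a := by rw [hbdef, ← pow_mul]; exact hrp1
    have hordub : orderOf ub = e := by
      rw [hubdef, orderOf_pow, h_ord_ua, Nat.Coprime.gcd_eq_one hcop, Nat.div_one]
    obtain ⟨hprod, hfac⟩ := factor_part b hb
    refine ⟨b, hb, hprod, hfac, fun _ => ⟨r, hr_pos, rfl, ?_, hr1, hrmod⟩,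
      fun h => absurd h hpa, ?_⟩
    · rw [← hub_coe, orderOf_units, hordub, he]
    · intro j hj1 hj2
      have hcoe : ζ ^ j * b = ((uζ ^ j * ub : Fˣ) : F) := by
        rw [Units.val_mul, Units.val_pow_eq_pow_val, huζ_coe, hub_coe]
      rw [hcoe, orderOf_units]
      rw [Commute.orderOf_mul_eq_mul_orderOf_of_coprime (Commute.all _ _)
        (by rw [hpj_cop j hj1 hj2, hordub]; exact hco), hpj_cop j hj1 hj2, hordub, he]
end

section
/- Let a ∈ F_q^*, let t be a positive integer such that X^t − a is irreducible over F_q, and let n be a positive integer with rad(n) ∣ ord(a). Assume 4 ∤ tn or q ≡ 1 (mod 4), and set d := gcd(n, (q−1)/ord(a)). Then there exists b ∈ F_q with b^d = a such that the factorization of X^{tn} − a into monic irreducible factors over F_q is ∏_{j=0}^{d−1} (X^{t·(n/d)} − ζ_d^j b), and ord(ζ_d^j b) = ord(a) · d for all 0 ≤ j ≤ d−1. -/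
open Polynomial

open IntermediateField

universe u


-- norm of the generator of K⟮x⟯ where minpoly x = X^m - C c
lemma my_norm_gen {K : Type u} [Field K] {E : Type u} [Field E] [Algebra K E]
    {m : ℕ} (hm : m ≠ 0) {c : K} (x : E) (hx : minpoly K x = X ^ m - C c) :
    Algebra.norm K (AdjoinSimple.gen K x) = (-1) ^ (m + 1) * c := by
  have hint : IsIntegral K x := by
    rw [← minpoly.ne_zero_iff (A := K), hx]
    exact X_pow_sub_C_ne_zero (Nat.pos_of_ne_zero hm) c
  rw [← IntermediateField.adjoin.powerBasis_gen hint,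
    Algebra.PowerBasis.norm_gen_eq_coeff_zero_minpoly,
    IntermediateField.adjoin.powerBasis_gen, IntermediateField.minpoly_gen, hx]
  have hdim : (IntermediateField.adjoin.powerBasis hint).dim = m := by
    simp [IntermediateField.adjoin.powerBasis, hx, natDegree_X_pow_sub_C]
  rw [hdim]
  simp only [coeff_sub, coeff_X_pow, coeff_C_zero]
  rw [if_neg (by omega : ¬ (0 : ℕ) = m)]
  ring

lemma my_aux2pow (k : ℕ) : ∀ (K : Type u) [Field K] (c : K),
    (∀ b : K, b ^ 2 ≠ c) → (2 ≤ k → ∃ i : K, i ^ 2 = -1) →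
    Irreducible (X ^ 2 ^ k - C c) := by
  induction k with
  | zero => intro K _ c hc _; simpa using irreducible_X_sub_C c
  | succ k IH =>
    intro K _ c hc hi
    rcases Nat.eq_zero_or_pos k with rfl | hk
    · simpa using X_pow_sub_C_irreducible_of_prime Nat.prime_two hc
    have h2 : Irreducible (X ^ 2 - C c) := X_pow_sub_C_irreducible_of_prime Nat.prime_two hc
    obtain ⟨i, hi2⟩ := hi (by omega)
    rw [pow_succ]
    refine X_pow_mul_sub_C_irreducible h2 ?_
    intro E _ _ x hx
    refine IH K⟮x⟯ _ ?_ ?_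
    · intro y hy
      have hnorm := my_norm_gen (by norm_num) x hx
      have hy2 : (Algebra.norm K y) ^ 2 = -c := by
        rw [← map_pow, hy, hnorm]; ring
      refine hc (i * Algebra.norm K y) ?_
      rw [mul_pow, hy2, hi2]; ring
    · intro _
      exact ⟨algebraMap K K⟮x⟯ i, by rw [← map_pow, hi2, map_neg, map_one]⟩

lemma my_aux_even (k w : ℕ) (hw : Odd w) (K : Type u) [Field K] (c : K)
    (hodd : ∀ p : ℕ, p.Prime → p ∣ w → ∀ b : K, b ^ p ≠ c)
    (h2 : 1 ≤ k → ∀ b : K, b ^ 2 ≠ c)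
    (hi : 2 ≤ k → ∃ i : K, i ^ 2 = -1) :
    Irreducible (X ^ (2 ^ k * w) - C c) := by
  rcases Nat.eq_zero_or_pos k with rfl | hk
  · simpa using X_pow_sub_C_irreducible_of_odd hw hodd
  refine X_pow_mul_sub_C_irreducible (X_pow_sub_C_irreducible_of_odd hw hodd) ?_
  intro E _ _ x hx
  refine my_aux2pow k K⟮x⟯ _ ?_ ?_
  · intro y hy
    have hnorm := my_norm_gen (by rintro rfl; simp at hw) x hx
    have hy2 : (Algebra.norm K y) ^ 2 = c := by
      rw [← map_pow, hy, hnorm, Even.neg_one_pow (by simpa using hw.add_one), one_mul]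
    exact h2 hk (Algebra.norm K y) hy2
  · intro h2k
    obtain ⟨i, hi2⟩ := hi h2k
    exact ⟨algebraMap K K⟮x⟯ i, by rw [← map_pow, hi2, map_neg, map_one]⟩

lemma my_ff_irred {K : Type u} [Field K] [Fintype K] (m : ℕ) (hm : 0 < m) (c : K)
    (hp : ∀ p : ℕ, p.Prime → p ∣ m → ∀ b : K, b ^ p ≠ c)
    (h4 : 4 ∣ m → Fintype.card K % 4 = 1) :
    Irreducible (X ^ m - C c) := by
  set k := m.factorization 2 with hk
  have hmw : 2 ^ k * (m / 2 ^ k) = m := Nat.ordProj_mul_ordCompl_eq_self m 2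
  have hw : Odd (m / 2 ^ k) := by
    have h2 : ¬ 2 ∣ m / 2 ^ k := Nat.not_dvd_ordCompl Nat.prime_two hm.ne'
    exact Nat.odd_iff.mpr (Nat.two_dvd_ne_zero.mp h2)
  rw [← hmw]
  refine my_aux_even k (m / 2 ^ k) hw K c ?_ ?_ ?_
  · intro p pp hpw
    exact hp p pp (hpw.trans (Nat.div_dvd_of_dvd (Nat.ordProj_dvd m 2)))
  · intro hk1
    refine hp 2 Nat.prime_two ?_
    exact dvd_trans (dvd_pow_self 2 (by omega : k ≠ 0)) (Nat.ordProj_dvd m 2)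
  · intro hk2
    have h4m : 4 ∣ m := by
      have : (2:ℕ) ^ 2 ∣ 2 ^ k := pow_dvd_pow 2 hk2
      exact dvd_trans (by norm_num at this ⊢; exact this) (Nat.ordProj_dvd m 2)
    have hcard := h4 h4m
    have hsq : IsSquare (-1 : K) := FiniteField.isSquare_neg_one_iff.mpr (by omega)
    obtain ⟨i, hi⟩ := hsq
    exact ⟨i, by rw [sq]; exact hi.symm⟩

lemma my_ord_dvd {K : Type u} [Field K] [Fintype K] {x : K} (hx : x ≠ 0) :
    orderOf x ∣ Fintype.card K - 1 := by
  classical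
  rw [← Fintype.card_units (α := K)]
  have : orderOf x = orderOf (Units.mk0 x hx) := by
    rw [← orderOf_units (y := Units.mk0 x hx)]; rfl
  rw [this]
  exact orderOf_dvd_card

lemma my_ord_pos {K : Type u} [Field K] [Fintype K] {x : K} (hx : x ≠ 0) :
    0 < orderOf x := by
  have : orderOf x = orderOf (Units.mk0 x hx) := by
    rw [← orderOf_units (y := Units.mk0 x hx)]; rfl
  rw [this]
  exact orderOf_pos _

lemma my_no_pth_root {K : Type u} [Field K] [Fintype K] {c : K} (hc : c ≠ 0)
    {p : ℕ} (hp : p.Prime) (hpq : p ∣ Fintype.card K - 1)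
    {w : ℕ} (hw : Fintype.card K - 1 = orderOf c * w) (hpw : ¬ p ∣ w) :
    ∀ x : K, x ^ p ≠ c := by
  intro x hx
  have hx0 : x ≠ 0 := by
    rintro rfl
    rw [zero_pow hp.ne_zero] at hx
    exact hc hx.symm
  have hN : 0 < orderOf c := my_ord_pos hc
  have hxcard := my_ord_dvd hx0
  have hord : orderOf c = orderOf x / Nat.gcd (orderOf x) p := by
    rw [← hx, orderOf_pow' x hp.ne_zero]
  have hgcd : Nat.gcd (orderOf x) p = 1 ∨ Nat.gcd (orderOf x) p = p :=
    (Nat.dvd_prime hp).mp (Nat.gcd_dvd_right _ _)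
  rcases hgcd with hg | hg
  · rw [hg, Nat.div_one] at hord
    have hpN : p ∣ orderOf c := by
      rcases (Nat.Prime.dvd_mul hp).mp (hw ▸ hpq) with h | h
      · exact h
      · exact absurd h hpw
    have : p ∣ Nat.gcd (orderOf x) p := Nat.dvd_gcd (hord ▸ hpN) dvd_rfl
    rw [hg] at this
    exact hp.one_lt.ne' (Nat.eq_one_of_dvd_one this)
  · have hpo : p ∣ orderOf x := hg ▸ Nat.gcd_dvd_left _ _
    have ho : orderOf x = orderOf c * p := by
      rw [hord, hg]
      exact (Nat.div_mul_cancel hpo).symm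
    have : orderOf c * p ∣ orderOf c * w := by
      rw [← ho, ← hw]; exact hxcard
    exact hpw ((mul_dvd_mul_iff_left hN.ne').mp this)

lemma my_root_order {K : Type u} [Field K] [Fintype K] {a b : K} (ha : a ≠ 0) {d : ℕ}
    (hd : 0 < d) (hb : b ^ d = a)
    (hrad : ∀ p : ℕ, p.Prime → p ∣ d → p ∣ orderOf a) :
    orderOf b = orderOf a * d := by
  have hb0 : b ≠ 0 := by rintro rfl; rw [zero_pow hd.ne'] at hb; exact ha hb.symm
  have hopos : 0 < orderOf b := my_ord_pos hb0
  have hepos : 0 < orderOf a := my_ord_pos ha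
  set o := orderOf b with ho
  set e := orderOf a with he
  set f := Nat.gcd o d with hf
  have hfo : f ∣ o := Nat.gcd_dvd_left _ _
  have hfd : f ∣ d := Nat.gcd_dvd_right _ _
  have heof : e = o / f := by rw [he, ← hb, orderOf_pow' b hd.ne']
  have hoef : o = e * f := by
    rw [heof, Nat.div_mul_cancel hfo]
  rcases eq_or_ne f d with hfd' | hfd'
  · rw [hoef, hfd']
  exfalso
  have hfpos : 0 < f := Nat.gcd_pos_of_pos_right _ hd
  have hdf : d / f ≠ 1 := by
    intro h
    exact hfd' (by rw [← Nat.div_mul_cancel hfd, h, one_mul])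
  obtain ⟨p, pp, hpdf⟩ := Nat.exists_prime_and_dvd hdf
  have hpfd : p * f ∣ d := by
    obtain ⟨u, hu⟩ := hpdf
    exact ⟨u, by rw [← Nat.div_mul_cancel hfd, hu]; ring⟩
  have hpd : p ∣ d := dvd_trans (dvd_mul_right p f) hpfd
  obtain ⟨e', he'⟩ := hrad p pp hpd
  have he'pos : 0 < e' := by
    rcases Nat.eq_zero_or_pos e' with rfl | h
    · rw [mul_zero] at he'; omega
    · exact h
  -- o = e*f = p*e'*f divides d*e'
  have hdvd : o ∣ d * e' := by
    rw [hoef, he']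
    obtain ⟨u, hu⟩ := hpfd
    exact ⟨u, by rw [hu]; ring⟩
  have hbde : b ^ (d * e') = 1 := orderOf_dvd_iff_pow_eq_one.mp hdvd
  have hae' : a ^ e' = 1 := by rw [← hb, ← pow_mul, mul_comm d e', mul_comm e' d, hbde]
  have : e ∣ e' := orderOf_dvd_iff_pow_eq_one.mpr hae'
  have := Nat.le_of_dvd he'pos this
  rw [he'] at this
  nlinarith [pp.two_le]

/-- Let `a ∈ F_q^*`, `t` a positive integer such that `X ^ t - a` is
irreducible over `F_q`, and `n` a positive integer with `rad n ∣ ord a`.  Assume `4 ∤ t n`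
or `q ≡ 1 (mod 4)` and set `d := gcd(n, (q - 1) / ord a)`.  Then there exists `b ∈ F_q`
with `b ^ d = a` such that the factorization of `X ^ (t n) - a` into monic irreducible
factors over `F_q` is `∏_{j=0}^{d-1} (X ^ (t (n / d)) - ζ_d^j b)`, and
`ord (ζ_d^j b) = ord a * d` for all `0 ≤ j ≤ d - 1`. -/
theorem stmt7 (q : ℕ) (F : Type*) [Field F] [Fintype F] (hF : Fintype.card F = q)
    (a : F) (ha : a ≠ 0)
    (t : ℕ) (ht : 0 < t) (hirr : Irreducible (X ^ t - C a))
    (n : ℕ) (hn : 0 < n) (hrad : (∏ p ∈ n.primeFactors, p) ∣ orderOf a)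
    (h4 : ¬ 4 ∣ t * n ∨ q % 4 = 1)
    (d : ℕ) (hd : d = Nat.gcd n ((q - 1) / orderOf a))
    (ζ : F) (hζ : IsPrimitiveRoot ζ d) :
    ∃ b : F, b ^ d = a ∧
      (X ^ (t * n) - C a : Polynomial F) =
        (∏ j ∈ Finset.range d, (X ^ (t * (n / d)) - C (ζ ^ j * b))) ∧
      ∀ j ∈ Finset.range d,
        (X ^ (t * (n / d)) - C (ζ ^ j * b)).Monic ∧
        Irreducible (X ^ (t * (n / d)) - C (ζ ^ j * b)) ∧
        orderOf (ζ ^ j * b) = orderOf a * d := by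
  classical
  subst hF
  set e := orderOf a with he
  have hepos : 0 < e := my_ord_pos ha
  have heq : e ∣ Fintype.card F - 1 := my_ord_dvd ha
  set s := (Fintype.card F - 1) / e with hs
  have hes : e * s = Fintype.card F - 1 := Nat.mul_div_cancel' heq
  have hdpos : 0 < d := hd ▸ Nat.gcd_pos_of_pos_left _ hn
  have hddn : d ∣ n := hd ▸ Nat.gcd_dvd_left _ _
  have hdds : d ∣ s := hd ▸ Nat.gcd_dvd_right _ _
  obtain ⟨s₁, hs₁⟩ := hdds
  have hdds : d ∣ s := ⟨s₁, hs₁⟩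
  have hrad' : ∀ p : ℕ, p.Prime → p ∣ n → p ∣ e := fun p pp hpn =>
    dvd_trans (Finset.dvd_prod_of_mem _ (Nat.mem_primeFactors.mpr ⟨pp, hpn, hn.ne'⟩)) hrad
  have hradd : ∀ p : ℕ, p.Prime → p ∣ d → p ∣ e := fun p pp hpd => hrad' p pp (hpd.trans hddn)
  -- generator of the unit group
  obtain ⟨g, hg⟩ := IsCyclic.exists_generator (α := Fˣ)
  have hgord : orderOf g = Fintype.card F - 1 := by
    rw [orderOf_eq_card_of_forall_mem_zpowers hg, Nat.card_eq_fintype_card,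
      Fintype.card_units]
  set u : Fˣ := Units.mk0 a ha with hu
  have hua : (u : F) = a := rfl
  obtain ⟨m, hm⟩ : ∃ m : ℕ, g ^ m = u := by
    have h1 := hg u
    rw [← (isOfFinOrder_of_finite g).mem_powers_iff_mem_zpowers] at h1
    exact (Submonoid.mem_powers_iff _ _).mp h1
  have hordu : orderOf u = e := by rw [he, ← hua, orderOf_units]
  have hgcdm : Nat.gcd (Fintype.card F - 1) m = s := by
    have h1 : orderOf (g ^ m) = orderOf g / Nat.gcd (orderOf g) m := orderOf_pow g
    rw [hm, hordu, hgord] at h1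
    have h2 : Nat.gcd (Fintype.card F - 1) m ∣ Fintype.card F - 1 := Nat.gcd_dvd_left _ _
    have h3 : e * Nat.gcd (Fintype.card F - 1) m = Fintype.card F - 1 := by
      rw [h1]; exact Nat.div_mul_cancel h2
    exact (Nat.eq_of_mul_eq_mul_left hepos (hes.trans h3.symm)).symm
  have hdm : d ∣ m := hdds.trans (hgcdm ▸ Nat.gcd_dvd_right _ _)
  set b : F := ((g ^ (m / d) : Fˣ) : F) with hbdef
  have hbd : b ^ d = a := by
    rw [hbdef, ← Units.val_pow_eq_pow_val, ← pow_mul, Nat.div_mul_cancel hdm, hm, hua]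
  have hM : 0 < t * (n / d) := Nat.mul_pos ht (Nat.div_pos (Nat.le_of_dvd hn hddn) hdpos)
  have hMd : (t * (n / d)) * d = t * n := by rw [mul_assoc, Nat.div_mul_cancel hddn]
  refine ⟨b, hbd, ?_, ?_⟩
  · have hprod := X_pow_sub_C_eq_prod hζ hdpos hbd
    have h1 := congrArg (fun P : Polynomial F => P.comp (X ^ (t * (n / d)))) hprod
    simp only [sub_comp, pow_comp, X_comp, C_comp, Polynomial.prod_comp] at h1
    rwa [← pow_mul, hMd] at h1
  · intro j hj
    set c : F := ζ ^ j * b with hc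
    have hζd : ζ ^ d = 1 := hζ.pow_eq_one
    have hcd : c ^ d = a := by
      rw [hc, mul_pow, ← pow_mul, mul_comm j d, pow_mul, hζd, one_pow, one_mul, hbd]
    have hc0 : c ≠ 0 := by
      intro h; rw [h, zero_pow hdpos.ne'] at hcd; exact ha hcd.symm
    have hordc : orderOf c = e * d := my_root_order ha hdpos hcd hradd
    refine ⟨monic_X_pow_sub_C _ hM.ne', ?_, hordc⟩
    refine my_ff_irred _ hM _ ?_ ?_
    · -- no p-th roots for primes p dividing the degree
      intro p pp hpM
      have hcard : Fintype.card F - 1 = orderOf c * s₁ := by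
        rw [hordc, ← hes, hs₁]; ring
      have key : p ∣ Fintype.card F - 1 ∧ ¬ p ∣ s₁ := by
        rcases (Nat.Prime.dvd_mul pp).mp hpM with hpt | hpnd
        · -- p divides t
          have hnopow : ∀ z : F, z ^ p ≠ a :=
            fun z => pow_ne_of_irreducible_X_pow_sub_C hirr hpt pp.ne_one z
          have hps : ¬ p ∣ s := by
            intro hps
            have hpm : p ∣ m := hps.trans (hgcdm ▸ Nat.gcd_dvd_right _ _)
            refine hnopow ((g ^ (m / p) : Fˣ) : F) ?_
            rw [← Units.val_pow_eq_pow_val, ← pow_mul, Nat.div_mul_cancel hpm, hm, hua]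
          have hpq : p ∣ Fintype.card F - 1 := by
            by_contra hpq
            have hcop : (Nat.card Fˣ).Coprime p := by
              rw [Nat.card_eq_fintype_card, Fintype.card_units]
              exact Nat.coprime_comm.mp ((Nat.Prime.coprime_iff_not_dvd pp).mpr hpq)
            obtain ⟨v, hv⟩ := (powCoprime hcop).surjective u
            refine hnopow ((v : Fˣ) : F) ?_
            have hvp : v ^ p = u := by rw [← powCoprime_apply hcop, hv]
            rw [← Units.val_pow_eq_pow_val, hvp, hua]
          exact ⟨hpq, fun h => hps (hs₁ ▸ (Dvd.dvd.mul_left h d))⟩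
        · -- p divides n / d
          have hpn : p ∣ n := hpnd.trans (Nat.div_dvd_of_dvd hddn)
          have hpe : p ∣ e := hrad' p pp hpn
          have hpq : p ∣ Fintype.card F - 1 := hpe.trans heq
          have hps₁ : ¬ p ∣ s₁ := by
            intro hps₁
            have h1 : d * p ∣ n := by
              obtain ⟨k, hk⟩ := hpnd
              exact ⟨k, by rw [← Nat.div_mul_cancel hddn, hk]; ring⟩
            have h2 : d * p ∣ s := by
              obtain ⟨k, hk⟩ := hps₁
              exact ⟨k, by rw [hs₁, hk]; ring⟩
            have h3 : d * p ∣ Nat.gcd n s := Nat.dvd_gcd h1 h2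
            rw [← hd] at h3
            have h4 := Nat.le_of_dvd hdpos h3
            nlinarith [pp.two_le, hdpos]
          exact ⟨hpq, hps₁⟩
      exact my_no_pth_root hc0 pp key.1 hcard key.2
    · intro h4M
      have h4tn : 4 ∣ t * n := by rw [← hMd]; exact h4M.mul_right d
      rcases h4 with h | h
      · exact absurd h4tn h
      · exact h
end

section
/- Let a ∈ F_q^*, let t be a positive integer such that X^t − a is irreducible over F_q, and let n be a positive integer with rad(n) ∣ (q − 1) and gcd(n, ord(a) · t) = 1. Assume 4 ∤ tn or q ≡ 1 (mod 4), and set d := gcd(n, q − 1) (which equals gcd(n, (q−1)/ord(a))). Then the factorization of X^{tn} − a into monic irreducible factors over F_q is ∏_{v ∣ n/d} ∏_{0 ≤ j ≤ d−1, gcd(j,v)=1} (X^{tv} − ζ_d^j a^{rv}), where r is a positive integer with r = 1 if a = 1 and r·n ≡ 1 (mod ord(a)) otherwise; moreover for all applicable v and j: (i) (ζ_d^j a^{rv})^{n/v} = a, and (ii) ord(ζ_d^j a^{rv}) = ord(a) · d/gcd(j,d). -/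
open Polynomial


section PowAux
variable {K : Type*} [Field K] [Fintype K]

lemma aux_ord_dvd {b : K} (hb : b ≠ 0) : orderOf b ∣ Fintype.card K - 1 :=
  orderOf_dvd_of_pow_eq_one (FiniteField.pow_card_sub_one_eq_one b hb)

lemma aux_finord {b : K} (hb : b ≠ 0) : IsOfFinOrder b := by
  refine isOfFinOrder_iff_pow_eq_one.mpr ⟨Fintype.card K - 1, ?_,
    FiniteField.pow_card_sub_one_eq_one b hb⟩
  have : 2 ≤ Fintype.card K := Fintype.one_lt_card
  omega

lemma aux_exists_pow_of_not_dvd {p : ℕ} (hp : p.Prime)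
    (h : ¬ p ∣ Fintype.card K - 1) {b : K} (hb : b ≠ 0) : ∃ c : K, c ^ p = b := by
  set N := Fintype.card K - 1 with hN
  have hN0 : 0 < N := by have : 2 ≤ Fintype.card K := Fintype.one_lt_card; omega
  have hco : Nat.Coprime p N := hp.coprime_iff_not_dvd.mpr h
  have hφ : p ^ N.totient ≡ 1 [MOD N] := Nat.ModEq.pow_totient hco
  have hφpos : 0 < N.totient := Nat.totient_pos.mpr hN0
  refine ⟨b ^ (p ^ (N.totient - 1)), ?_⟩
  rw [← pow_mul]
  have hexp : p ^ (N.totient - 1) * p = p ^ N.totient := by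
    rw [← pow_succ, Nat.sub_add_cancel hφpos]
  rw [hexp]
  have hmod : p ^ N.totient ≡ 1 [MOD orderOf b] := hφ.of_dvd (aux_ord_dvd hb)
  calc b ^ p ^ N.totient = b ^ (p ^ N.totient % orderOf b) := (pow_mod_orderOf _ _).symm
    _ = b ^ (1 % orderOf b) := by rw [hmod]
    _ = b ^ (1 : ℕ) := pow_mod_orderOf _ _
    _ = b := pow_one b

lemma aux_exists_pow_of_lt {p : ℕ} (hp : p.Prime) {b : K} (hb : b ≠ 0)
    (h : (orderOf b).factorization p < (Fintype.card K - 1).factorization p) :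
    ∃ c : K, c ^ p = b := by
  set u : Kˣ := Units.mk0 b hb with hu
  obtain ⟨g, hg⟩ := IsCyclic.exists_generator (α := Kˣ)
  obtain ⟨k, hk'⟩ := (isOfFinOrder_of_finite g).mem_powers_iff_mem_zpowers.mpr (hg u)
  have hk : g ^ k = u := hk'
  have hou : orderOf u = orderOf b := by
    rw [← orderOf_units (y := u)]; rfl
  have hog : orderOf g = Fintype.card K - 1 := by
    rw [orderOf_eq_card_of_forall_mem_zpowers hg, Nat.card_units, Nat.card_eq_fintype_card]
  have hogk : orderOf (g ^ k) = orderOf g / Nat.gcd (orderOf g) k := orderOf_pow g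
  have hpk : p ∣ k := by
    by_contra hpk
    have h1 : ¬ p ∣ Nat.gcd (orderOf g) k := fun hd => hpk (hd.trans (Nat.gcd_dvd_right _ _))
    have h2 : (Nat.gcd (orderOf g) k).factorization p = 0 :=
      Nat.factorization_eq_zero_of_not_dvd h1
    have hgcd_dvd : Nat.gcd (orderOf g) k ∣ orderOf g := Nat.gcd_dvd_left _ _
    have hog0 : orderOf g ≠ 0 := (orderOf_pos g).ne'
    have h3 : (orderOf g / Nat.gcd (orderOf g) k).factorization p
        = (orderOf g).factorization p := by
      rw [Nat.factorization_div hgcd_dvd]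
      simp [h2]
    rw [← hou, ← hk, hogk, h3, hog] at h
    exact lt_irrefl _ h
  obtain ⟨k', rfl⟩ := hpk
  clear hk'
  refine ⟨((g ^ k' : Kˣ) : K), ?_⟩
  have : ((g ^ k') ^ p : Kˣ) = u := by rw [← pow_mul, mul_comm k' p, hk]
  calc ((g ^ k' : Kˣ) : K) ^ p = (((g ^ k') ^ p : Kˣ) : K) := by push_cast; ring
    _ = (u : K) := by rw [this]
    _ = b := rfl

lemma aux_pow_ne {p : ℕ} (hp : p.Prime) (hpq : p ∣ Fintype.card K - 1) {b : K} (hb : b ≠ 0)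
    (h : (orderOf b).factorization p = (Fintype.card K - 1).factorization p) :
    ∀ c : K, c ^ p ≠ b := by
  intro c hc
  have hN0 : Fintype.card K - 1 ≠ 0 := by
    have : 2 ≤ Fintype.card K := Fintype.one_lt_card; omega
  have hc0 : c ≠ 0 := by
    rintro rfl; rw [zero_pow hp.ne_zero] at hc; exact hb hc.symm
  have hfo : IsOfFinOrder c := aux_finord hc0
  have hoc0 : orderOf c ≠ 0 := hfo.orderOf_pos.ne'
  have hordb : orderOf b = orderOf c / Nat.gcd (orderOf c) p := by
    rw [← hc]; exact hfo.orderOf_pow ..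
  have hvpos : 0 < (Fintype.card K - 1).factorization p :=
    hp.factorization_pos_of_dvd hN0 hpq
  by_cases hpc : p ∣ orderOf c
  · have hgcd : Nat.gcd (orderOf c) p = p := Nat.gcd_eq_right hpc
    have hvc : (orderOf c).factorization p ≤ (Fintype.card K - 1).factorization p := by
      exact (Nat.factorization_le_iff_dvd hoc0 hN0).mpr (aux_ord_dvd hc0) p
    have : (orderOf b).factorization p = (orderOf c).factorization p - 1 := by
      rw [hordb, hgcd, Nat.factorization_div hpc]
      simp [hp.factorization]
    have hvcpos : 0 < (orderOf c).factorization p := hp.factorization_pos_of_dvd hoc0 hpc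
    omega
  · have hgcd : Nat.gcd (orderOf c) p = 1 := (Nat.coprime_comm.mp (hp.coprime_iff_not_dvd.mpr hpc))
    have h0 : (orderOf b).factorization p = 0 := by
      rw [hordb, hgcd, Nat.div_one]
      exact Nat.factorization_eq_zero_of_not_dvd hpc
    omega

lemma aux_of_pow_ne {p : ℕ} (hp : p.Prime) {b : K} (hb : b ≠ 0)
    (h : ∀ c : K, c ^ p ≠ b) :
    p ∣ Fintype.card K - 1 ∧
      (orderOf b).factorization p = (Fintype.card K - 1).factorization p := by
  have hN0 : Fintype.card K - 1 ≠ 0 := by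
    have : 2 ≤ Fintype.card K := Fintype.one_lt_card; omega
  have h1 : p ∣ Fintype.card K - 1 := by
    by_contra h1
    obtain ⟨c, hc⟩ := aux_exists_pow_of_not_dvd hp h1 hb
    exact h c hc
  refine ⟨h1, ?_⟩
  have hle : (orderOf b).factorization p ≤ (Fintype.card K - 1).factorization p :=
    (Nat.factorization_le_iff_dvd (aux_finord hb).orderOf_pos.ne' hN0).mpr (aux_ord_dvd hb) p
  rcases lt_or_eq_of_le hle with hlt | heq
  · obtain ⟨c, hc⟩ := aux_exists_pow_of_lt hp hb hlt
    exact absurd hc (h c)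
  · exact heq

end PowAux


section LTE

lemma aux_binom (m : ℤ) (i : ℕ) : m ^ 2 ∣ (1 + m) ^ i - (1 + i * m) := by
  induction i with
  | zero => simp
  | succ i ih =>
    have hz : (1 + m) ^ (i + 1) - (1 + (↑(i + 1) : ℤ) * m)
        = ((1 + m) ^ i - (1 + i * m)) * (1 + m) + i * m ^ 2 := by push_cast; ring
    rw [hz]
    exact dvd_add (ih.mul_right _) (Dvd.dvd.mul_left (dvd_refl _) _)

lemma aux_geom_sum_nat (Q p : ℕ) (hQ : 1 ≤ Q) :
    Q ^ p - 1 = (Q - 1) * ∑ i ∈ Finset.range p, Q ^ i := by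
  have h1 : 1 ≤ Q ^ p := Nat.one_le_pow _ _ hQ
  have := geom_sum_mul (Q : ℤ) p   -- (∑ i in range p, Q^i) * (Q - 1) = Q^p - 1
  have hz : ((Q ^ p - 1 : ℕ) : ℤ) = ((Q - 1 : ℕ) : ℤ) * ((∑ i ∈ Finset.range p, Q ^ i : ℕ) : ℤ) := by
    push_cast [Nat.cast_sub h1, Nat.cast_sub hQ]
    rw [← this]; ring
  exact_mod_cast hz

lemma aux_lte {Q p ℓ : ℕ} (hQ : 2 ≤ Q) (hp : p.Prime) (hl : ℓ.Prime) (hlQ : ℓ ∣ Q - 1)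
    (h4 : ℓ = p → p = 2 → Q % 4 = 1) :
    (Q ^ p - 1).factorization ℓ =
      (Q - 1).factorization ℓ + (if ℓ = p then 1 else 0) := by
  have hQ1 : 1 ≤ Q := by omega
  set N := Q - 1 with hN
  set S := ∑ i ∈ Finset.range p, Q ^ i with hS
  have hfact : Q ^ p - 1 = N * S := aux_geom_sum_nat Q p hQ1
  have hN0 : N ≠ 0 := by omega
  have hS0 : S ≠ 0 := by
    have : 1 ≤ S := by
      have : 0 < p := hp.pos
      calc 1 = 1 ^ 1 := by norm_num
        _ ≤ S := by
          rw [hS]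
          calc (1:ℕ) ≤ Q ^ 0 := by simp
            _ ≤ ∑ i ∈ Finset.range p, Q ^ i :=
              Finset.single_le_sum (f := fun i => Q ^ i) (fun i _ => Nat.zero_le _)
                (Finset.mem_range.mpr hp.pos)
    omega
  have hQN : Q = N + 1 := by omega
  have hmul : (Q ^ p - 1).factorization ℓ = N.factorization ℓ + S.factorization ℓ := by
    rw [hfact, Nat.factorization_mul hN0 hS0]; simp
  rw [hmul]
  congr 1
  -- now compute S.factorization ℓ
  haveI : NeZero ℓ := ⟨hl.ne_zero⟩
  have hQmod : (Q : ZMod ℓ) = 1 := by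
    have : ((N : ℕ) : ZMod ℓ) = 0 := (ZMod.natCast_eq_zero_iff N ℓ).mpr hlQ
    rw [hQN]; push_cast [this]; ring
  have hSmod : (S : ZMod ℓ) = (p : ZMod ℓ) := by
    rw [hS]; push_cast [hQmod]; simp
  by_cases hlp : ℓ = p
  · subst hlp
    rw [if_pos rfl]
    -- v_ℓ(S) = 1
    have hdvd : ℓ ∣ S := by
      rw [← ZMod.natCast_eq_zero_iff, hSmod, ZMod.natCast_self]
    have hnotdvd : ¬ ℓ ^ 2 ∣ S := by
      rcases hl.eq_two_or_odd' with h2 | hodd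
      · -- ℓ = p = 2 : S = 1 + Q, Q % 4 = 1
        subst h2
        have hq4 : Q % 4 = 1 := h4 rfl rfl
        have hSval : S = Q + 1 := by
          rw [hS]; simp [Finset.sum_range_succ, Nat.add_comm]
        intro hdvd4
        rw [hSval] at hdvd4
        omega
      · -- odd case : S ≡ ℓ mod ℓ²
        intro hdvd2
        -- work in ℤ
        have hlN : (ℓ : ℤ) ∣ (N : ℤ) := Int.natCast_dvd_natCast.mpr hlQ
        have key : ((ℓ:ℤ)) ^ 2 ∣ (S : ℤ) - ℓ := by
          have hSZ : (S : ℤ) = ∑ i ∈ Finset.range ℓ, (1 + (N:ℤ)) ^ i := by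
            rw [hS]; push_cast [hQN]; ring_nf
          have h1 : (N:ℤ) ^ 2 ∣ (S : ℤ) - (∑ i ∈ Finset.range ℓ, (1 + (i:ℤ) * N)) := by
            rw [hSZ, ← Finset.sum_sub_distrib]
            exact Finset.dvd_sum fun i _ => aux_binom (N:ℤ) i
          have h2 : (∑ i ∈ Finset.range ℓ, (1 + (i:ℤ) * N))
              = ℓ + (∑ i ∈ Finset.range ℓ, (i:ℤ)) * N := by
            rw [Finset.sum_add_distrib, Finset.sum_mul]
            simp [Finset.sum_mul]
          obtain ⟨w, hw⟩ := hodd  -- ℓ = 2*w + 1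
          have hsum : (∑ i ∈ Finset.range ℓ, (i:ℤ)) = ℓ * w := by
            have := Finset.sum_range_id_mul_two ℓ  -- (∑ i, i) * 2 = ℓ * (ℓ - 1)
            have hz : ((∑ i ∈ Finset.range ℓ, i : ℕ) : ℤ) * 2 = (ℓ:ℤ) * (2 * w) := by
              rw_mod_cast [this]
              rw [hw]; push_cast; ring
            have : ((∑ i ∈ Finset.range ℓ, i : ℕ) : ℤ) = (ℓ:ℤ) * w := by linarith
            rw [← this]; push_cast; ring
          have h3 : ((ℓ:ℤ)) ^ 2 ∣ (∑ i ∈ Finset.range ℓ, (i:ℤ)) * N := by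
            rw [hsum]
            obtain ⟨N', hN'⟩ := hlN
            refine ⟨w * N', ?_⟩
            rw [hN']; ring
          have h4' : ((ℓ:ℤ)) ^ 2 ∣ (N:ℤ) ^ 2 := pow_dvd_pow_of_dvd hlN 2
          rw [h2] at h1
          have h5 : ((ℓ:ℤ)) ^ 2 ∣ (S : ℤ) - ((ℓ:ℤ) + (∑ i ∈ Finset.range ℓ, (i:ℤ)) * N) :=
            h4'.trans h1
          have hre : (S:ℤ) - ℓ = ((S:ℤ) - ((ℓ:ℤ) + (∑ i ∈ Finset.range ℓ, (i:ℤ)) * N))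
              + (∑ i ∈ Finset.range ℓ, (i:ℤ)) * N := by ring
          rw [hre]
          exact dvd_add h5 h3
        have : ((ℓ:ℤ)) ^ 2 ∣ (ℓ : ℤ) := by
          have hS2 : ((ℓ:ℤ)) ^ 2 ∣ (S : ℤ) := by exact_mod_cast Int.natCast_dvd_natCast.mpr hdvd2
          have := hS2.sub key
          simpa using this
        have : (ℓ:ℕ) ^ 2 ∣ ℓ := by exact_mod_cast this
        have := Nat.le_of_dvd hl.pos this
        nlinarith [hl.two_le]
    -- conclude factorization = 1
    have h1 : 1 ≤ S.factorization ℓ := by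
      rw [← hl.pow_dvd_iff_le_factorization hS0, pow_one]; exact hdvd
    have h2 : ¬ 2 ≤ S.factorization ℓ := by
      rw [← hl.pow_dvd_iff_le_factorization hS0]; exact hnotdvd
    omega
  · simp only [if_neg hlp]
    have : ¬ ℓ ∣ S := by
      rw [← ZMod.natCast_eq_zero_iff, hSmod]
      intro h0
      exact hlp ((Nat.prime_dvd_prime_iff_eq hl hp).mp
        ((ZMod.natCast_eq_zero_iff p ℓ).mp h0))
    exact Nat.factorization_eq_zero_of_not_dvd this

end LTE


lemma aux_count {v : ℕ} (D : ℕ) (hv : v ≠ 0) (hdvd : (∏ p ∈ v.primeFactors, p) ∣ D) :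
    ((Finset.range D).filter (fun j => Nat.Coprime j v)).card * v = D * v.totient := by
  classical
  set r := ∏ p ∈ v.primeFactors, p with hrdef
  have hr0 : r ≠ 0 := by
    rw [hrdef]
    exact Finset.prod_ne_zero_iff.mpr fun p hp => (Nat.prime_of_mem_primeFactors hp).ne_zero
  have hrv : r ∣ v := Nat.prod_primeFactors_dvd v
  have hcoiff : ∀ j, Nat.Coprime j v ↔ Nat.Coprime r j := by
    intro j
    constructor
    · intro h
      exact (Nat.Coprime.coprime_dvd_right hrv h).symm
    · intro h
      by_contra hc
      obtain ⟨q, hq, hqd⟩ := Nat.exists_prime_and_dvd hc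
      have hqj : q ∣ j := hqd.trans (Nat.gcd_dvd_left _ _)
      have hqv : q ∣ v := hqd.trans (Nat.gcd_dvd_right _ _)
      have hqr : q ∣ r := Finset.dvd_prod_of_mem _ (Nat.mem_primeFactors.mpr ⟨hq, hqv, hv⟩)
      have h1 : q ∣ 1 := (Nat.dvd_gcd hqr hqj).trans (dvd_of_eq h)
      exact hq.one_lt.ne' (Nat.dvd_one.mp h1)
  have hchunk : ∀ k : ℕ,
      ((Finset.range (k * r)).filter (fun j => Nat.Coprime j v)).card = k * r.totient := by
    intro k
    induction k with
    | zero => simp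
    | succ k ih =>
      have hsplit : Finset.range ((k + 1) * r)
          = Finset.range (k * r) ∪ Finset.Ico (k * r) (k * r + r) := by
        have he : (k + 1) * r = k * r + r := by ring
        rw [Finset.range_eq_Ico, he, Finset.range_eq_Ico]
        exact (Finset.Ico_union_Ico_eq_Ico (Nat.zero_le (k * r)) (Nat.le_add_right _ _)).symm
      have hdisj : Disjoint ((Finset.range (k * r)).filter (fun j => Nat.Coprime j v))
          ((Finset.Ico (k * r) (k * r + r)).filter (fun j => Nat.Coprime j v)) := by
        apply Finset.disjoint_filter_filter
        rw [Finset.range_eq_Ico]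
        exact Finset.Ico_disjoint_Ico_consecutive 0 (k * r) (k * r + r)
      rw [hsplit, Finset.filter_union, Finset.card_union_of_disjoint hdisj, ih]
      have hIco : ((Finset.Ico (k * r) (k * r + r)).filter (fun j => Nat.Coprime j v)).card
          = r.totient := by
        rw [← Nat.filter_coprime_Ico_eq_totient r (k * r)]
        congr 1
        apply Finset.filter_congr
        intro j _
        rw [hcoiff j]
      rw [hIco, Nat.succ_mul]
  obtain ⟨k, hk⟩ := hdvd
  have hcard : ((Finset.range D).filter (fun j => Nat.Coprime j v)).card = k * r.totient := by
    rw [hk, mul_comm r k]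
    exact hchunk k
  have hφr : r.totient = ∏ p ∈ v.primeFactors, (p - 1) := by
    have hpf : r.primeFactors = v.primeFactors := by
      rw [hrdef]
      exact Nat.primeFactors_prod (fun p hp => Nat.prime_of_mem_primeFactors hp)
    have h2 := Nat.totient_mul_prod_primeFactors r
    rw [hpf, ← hrdef] at h2
    exact Nat.eq_of_mul_eq_mul_right (Nat.pos_of_ne_zero hr0) (h2.trans (mul_comm r _))
  have hvr : v.totient * r = v * r.totient := by
    have h1 := Nat.totient_mul_prod_primeFactors v
    rw [← hrdef] at h1
    rw [hφr]
    exact h1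
  calc ((Finset.range D).filter (fun j => Nat.Coprime j v)).card * v
      = k * (r.totient * v) := by rw [hcard]; ring
    _ = k * (v.totient * r) := by rw [mul_comm r.totient v, hvr]
    _ = (r * k) * v.totient := by ring
    _ = D * v.totient := by rw [← hk]

section Key
open IntermediateField

universe u

lemma aux_key (s : ℕ) : ∀ (K : Type u) (_ : Field K) (_ : Fintype K) (b : K), b ≠ 0 →
    (∀ p : ℕ, p.Prime → p ∣ s → p ∣ Fintype.card K - 1 ∧
      (orderOf b).factorization p = (Fintype.card K - 1).factorization p) →
    (4 ∣ s → Fintype.card K % 4 = 1) →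
    Irreducible (X ^ s - C b) := by
  induction s using induction_on_primes with
  | zero =>
    intro K _ _ b hb hcond _
    exfalso
    obtain ⟨p, hple, hp⟩ := Nat.exists_infinite_primes (Fintype.card K)
    have := (hcond p hp (dvd_zero p)).1
    have h2 : 2 ≤ Fintype.card K := Fintype.one_lt_card
    have := Nat.le_of_dvd (by omega) this
    omega
  | one =>
    intro K _ _ b _ _ _
    simpa using irreducible_X_sub_C b
  | prime_mul p s' hp ih =>
    intro K _ _ b hb hcond h4
    have hQ2 : 2 ≤ Fintype.card K := Fintype.one_lt_card
    obtain ⟨hpQ, hpv⟩ := hcond p hp (dvd_mul_right p s')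
    have hP3 : ∀ c : K, c ^ p ≠ b := aux_pow_ne hp hpQ hb hpv
    have hirr_p : Irreducible (X ^ p - C b) := X_pow_sub_C_irreducible_of_prime hp hP3
    rw [mul_comm p s']
    apply X_pow_mul_sub_C_irreducible hirr_p
    intro E _ _ x hx
    have hmin_ne : minpoly K x ≠ 0 := by
      rw [hx]; exact X_pow_sub_C_ne_zero hp.pos b
    have hxint : IsIntegral K x := by
      by_contra hc; exact hmin_ne (minpoly.eq_zero hc)
    haveI : FiniteDimensional K K⟮x⟯ := adjoin.finiteDimensional hxint
    haveI : Finite K⟮x⟯ := Module.finite_of_finite K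
    letI instL : Fintype K⟮x⟯ := Fintype.ofFinite _
    have hcardL : Fintype.card K⟮x⟯ = Fintype.card K ^ p := by
      rw [Module.card_eq_pow_finrank (K := K) (V := K⟮x⟯), adjoin.finrank hxint, hx,
        natDegree_X_pow_sub_C]
    set g : K⟮x⟯ := AdjoinSimple.gen K x with hgdef
    have hming : minpoly K g = X ^ p - C b := by
      rw [minpoly_gen K x, hx]
    have hgp : g ^ p = algebraMap K K⟮x⟯ b := by
      have h0 := minpoly.aeval K g
      rw [hming] at h0
      simpa [sub_eq_zero] using h0
    have hbL : algebraMap K K⟮x⟯ b ≠ 0 := by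
      intro h0
      exact hb ((algebraMap K K⟮x⟯).injective (by rw [h0, map_zero]))
    have hg0 : g ≠ 0 := by
      intro h0
      rw [h0, zero_pow hp.ne_zero] at hgp
      exact hbL hgp.symm
    have hordb : orderOf (algebraMap K K⟮x⟯ b) = orderOf b :=
      orderOf_injective (algebraMap K K⟮x⟯).toMonoidHom (algebraMap K K⟮x⟯).injective b
    -- orderOf g = p * orderOf b
    have hfing : IsOfFinOrder g := by
      refine isOfFinOrder_iff_pow_eq_one.mpr ⟨Fintype.card K⟮x⟯ - 1, by
        have : 2 ≤ Fintype.card K⟮x⟯ := Fintype.one_lt_card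
        omega, FiniteField.pow_card_sub_one_eq_one g hg0⟩
    have hog0 : orderOf g ≠ 0 := hfing.orderOf_pos.ne'
    have hpo : p ∣ orderOf g := by
      by_contra hpo
      have hco : Nat.Coprime p (orderOf g) := hp.coprime_iff_not_dvd.mpr hpo
      have hφ : p ^ (orderOf g).totient ≡ 1 [MOD orderOf g] := Nat.ModEq.pow_totient hco
      have hφpos : 0 < (orderOf g).totient := Nat.totient_pos.mpr hfing.orderOf_pos
      have hgg : g ^ p ^ (orderOf g).totient = g := by
        calc g ^ p ^ (orderOf g).totient = g ^ (p ^ (orderOf g).totient % orderOf g) :=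
              (pow_mod_orderOf _ _).symm
          _ = g ^ (1 % orderOf g) := by rw [hφ]
          _ = g ^ (1 : ℕ) := pow_mod_orderOf _ _
          _ = g := pow_one g
      have hsplit : p ^ (orderOf g).totient = p ^ ((orderOf g).totient - 1) * p := by
        rw [← pow_succ, Nat.sub_add_cancel hφpos]
      have hc : algebraMap K K⟮x⟯ (b ^ (p ^ ((orderOf g).totient - 1))) = g := by
        rw [map_pow, ← hgp, ← pow_mul, mul_comm p _, ← hsplit, hgg]
      have : (b ^ (p ^ ((orderOf g).totient - 1))) ^ p = b := by
        apply (algebraMap K K⟮x⟯).injective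
        rw [map_pow, hc, hgp]
      exact hP3 _ this
    have horder : orderOf (g ^ p) = orderOf g / p := by
      rw [orderOf_pow' g hp.ne_zero, Nat.gcd_eq_right hpo]
    have hob : orderOf b = orderOf g / p := by rw [← hordb, ← hgp, horder]
    have hogval : orderOf g = p * orderOf b := by
      rw [hob]; exact (Nat.mul_div_cancel' hpo).symm
    -- apply induction hypothesis
    have hgoal := ih K⟮x⟯ inferInstance instL g hg0 ?_ ?_
    · exact hgoal
    · intro ℓ hl hls'
      obtain ⟨hlQ, hlv⟩ := hcond ℓ hl (hls'.mul_left p)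
      have hl4 : ℓ = p → p = 2 → Fintype.card K % 4 = 1 := by
        intro h1 h2
        apply h4
        subst h1 h2
        exact mul_dvd_mul (dvd_refl 2) hls'
      have hlte := aux_lte hQ2 hp hl hlQ hl4
      constructor
      · rw [hcardL]
        exact hlQ.trans (by simpa using Nat.sub_dvd_pow_sub_pow (Fintype.card K) 1 p)
      · have he0 : orderOf b ≠ 0 := by
          intro h0
          rw [h0, mul_zero] at hogval
          exact hog0 hogval
        have hfacp : (Nat.factorization p) ℓ = if ℓ = p then 1 else 0 := by
          by_cases h : ℓ = p
          · subst h; rw [if_pos rfl, hp.factorization_self]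
          · rw [if_neg h]
            exact Nat.factorization_eq_zero_of_not_dvd
              (fun hd => h ((Nat.prime_dvd_prime_iff_eq hl hp).mp hd))
        rw [hogval, Nat.factorization_mul hp.ne_zero he0, hcardL]
        simp only [Finsupp.coe_add, Pi.add_apply]
        rw [hfacp, hlv, hlte]
        exact Nat.add_comm _ _
    · intro h4'
      rw [hcardL, Nat.pow_mod, h4 (dvd_mul_of_dvd_right h4' p), one_pow]
      decide

end Key

/-- Let `a ∈ F_q^*`, `t` a positive integer such that `X ^ t - a` is
irreducible over `F_q`, and `n` a positive integer with `rad n ∣ q - 1` and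
`gcd(n, ord a * t) = 1`.  Assume `4 ∤ t n` or `q ≡ 1 (mod 4)`, and set
`d := gcd(n, q - 1)` (which equals `gcd(n, (q - 1) / ord a)`).  Then the factorization of
`X ^ (t n) - a` into monic irreducible factors over `F_q` is
`∏_{v ∣ n/d} ∏_{0 ≤ j ≤ d - 1, gcd(j, v) = 1} (X ^ (t v) - ζ_d^j a^(r v))`, where `r` is a
positive integer with `r = 1` if `a = 1` and `r n ≡ 1 (mod ord a)` otherwise; moreover
for all applicable `v, j`: (i) `(ζ_d^j a^(r v))^(n / v) = a`, and
(ii) `ord (ζ_d^j a^(r v)) = ord a * d / gcd(j, d)`. -/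
theorem stmt8 (q : ℕ) (F : Type*) [Field F] [Fintype F] (hF : Fintype.card F = q)
    (a : F) (ha : a ≠ 0)
    (t : ℕ) (ht : 0 < t) (hirr : Irreducible (X ^ t - C a))
    (n : ℕ) (hn : 0 < n) (hrad : (∏ p ∈ n.primeFactors, p) ∣ q - 1)
    (hcop : Nat.Coprime n (orderOf a * t))
    (h4 : ¬ 4 ∣ t * n ∨ q % 4 = 1)
    (d : ℕ) (hd : d = Nat.gcd n (q - 1))
    (ζ : F) (hζ : IsPrimitiveRoot ζ d) :
    d = Nat.gcd n ((q - 1) / orderOf a) ∧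
    ∀ r : ℕ, 0 < r → (a = 1 → r = 1) → (a ≠ 1 → r * n ≡ 1 [MOD orderOf a]) →
      ((X ^ (t * n) - C a : Polynomial F) =
        ∏ v ∈ (n / d).divisors, ∏ j ∈ (Finset.range d).filter (fun j => Nat.Coprime j v),
          (X ^ (t * v) - C (ζ ^ j * a ^ (r * v)))) ∧
      ∀ v ∈ (n / d).divisors, ∀ j ∈ (Finset.range d).filter (fun j => Nat.Coprime j v),
        (X ^ (t * v) - C (ζ ^ j * a ^ (r * v))).Monic ∧
        Irreducible (X ^ (t * v) - C (ζ ^ j * a ^ (r * v))) ∧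
        (ζ ^ j * a ^ (r * v)) ^ (n / v) = a ∧
        orderOf (ζ ^ j * a ^ (r * v)) = orderOf a * (d / Nat.gcd j d) := by
  subst hF
  classical
  have hq2 : 2 ≤ Fintype.card F := Fintype.one_lt_card
  have hq1 : Fintype.card F - 1 ≠ 0 := by omega
  have hedvd : orderOf a ∣ Fintype.card F - 1 := aux_ord_dvd ha
  have he0 : orderOf a ≠ 0 := (aux_finord ha).orderOf_pos.ne'
  have hcop_ne : n.Coprime (orderOf a) :=
    Nat.Coprime.coprime_dvd_right (dvd_mul_right (orderOf a) t) hcop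
  have part1 : d = Nat.gcd n ((Fintype.card F - 1) / orderOf a) := by
    obtain ⟨w, hw⟩ := hedvd
    have hww : (Fintype.card F - 1) / orderOf a = w := by
      rw [hw]; exact Nat.mul_div_cancel_left w (Nat.pos_of_ne_zero he0)
    rw [hd, hww, hw]
    exact Nat.Coprime.gcd_mul_left_cancel_right w hcop_ne.symm
  refine ⟨part1, ?_⟩
  intro r hr ha1 har
  -- unified modular facts
  have hrn1 : r * n ≡ 1 [MOD orderOf a] := by
    by_cases h1 : a = 1
    · have he1 : orderOf a = 1 := by rw [h1, orderOf_one]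
      rw [he1]
      exact Nat.modEq_one
    · exact har h1
  have hrnpos : 1 ≤ r * n := Nat.mul_pos hr hn
  obtain ⟨c₀, hc₀⟩ : orderOf a ∣ r * n - 1 := (Nat.modEq_iff_dvd' hrnpos).mp hrn1.symm
  have hrn : r * n = 1 + orderOf a * c₀ := by omega
  have hacop : Nat.Coprime (r * n) (orderOf a) := by
    rw [hrn]
    exact (Nat.coprime_add_mul_left_left 1 (orderOf a) c₀).mpr (Nat.coprime_one_left _)
  have ha_rn : a ^ (r * n) = a := by
    rw [hrn, pow_add, pow_one, pow_mul, pow_orderOf_eq_one, one_pow, mul_one]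
  have hd_n : d ∣ n := hd ▸ Nat.gcd_dvd_left n _
  have hd_q : d ∣ Fintype.card F - 1 := hd ▸ Nat.gcd_dvd_right n _
  have hd0 : d ≠ 0 := by rw [hd]; exact (Nat.gcd_pos_of_pos_left _ hn).ne'
  have hdm : d * (n / d) = n := Nat.mul_div_cancel' hd_n
  have hm0 : n / d ≠ 0 := by
    intro h0; rw [h0, mul_zero] at hdm; omega
  have hmn : n / d ∣ n := ⟨d, (Nat.div_mul_cancel hd_n).symm⟩
  have hζ0 : ζ ≠ 0 := by
    intro h0
    have h1 := hζ.pow_eq_one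
    rw [h0, zero_pow hd0] at h1
    exact zero_ne_one h1
  have hoζ : orderOf ζ = d := hζ.eq_orderOf.symm
  have hrad_d : (∏ p ∈ n.primeFactors, p) ∣ d :=
    hd ▸ Nat.dvd_gcd (Nat.prod_primeFactors_dvd n) hrad
  -- per-pair facts
  have main : ∀ v ∈ (n / d).divisors,
      ∀ j ∈ (Finset.range d).filter (fun j => Nat.Coprime j v),
      (X ^ (t * v) - C (ζ ^ j * a ^ (r * v))).Monic ∧
      Irreducible (X ^ (t * v) - C (ζ ^ j * a ^ (r * v))) ∧
      (ζ ^ j * a ^ (r * v)) ^ (n / v) = a ∧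
      orderOf (ζ ^ j * a ^ (r * v)) = orderOf a * (d / Nat.gcd j d) := by
    intro v hv j hj
    have hvm : v ∣ n / d := (Nat.mem_divisors.mp hv).1
    have hv0 : 0 < v := Nat.pos_of_mem_divisors hv
    have hjmem := Finset.mem_filter.mp hj
    have hjd : j < d := Finset.mem_range.mp hjmem.1
    have hjv : Nat.Coprime j v := hjmem.2
    have hvn : v ∣ n := hvm.trans hmn
    have htv0 : t * v ≠ 0 := Nat.mul_ne_zero ht.ne' hv0.ne'
    have hb0 : ζ ^ j * a ^ (r * v) ≠ 0 := mul_ne_zero (pow_ne_zero _ hζ0) (pow_ne_zero _ ha)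
    have hcoprv : Nat.Coprime (r * v) (orderOf a) :=
      Nat.Coprime.coprime_dvd_left (mul_dvd_mul_left r hvn) hacop
    have hoa : orderOf (a ^ (r * v)) = orderOf a := by
      rw [orderOf_pow' a (Nat.mul_ne_zero hr.ne' hv0.ne'), hcoprv.symm.gcd_eq_one, Nat.div_one]
    have hoζj : orderOf (ζ ^ j) = d / Nat.gcd d j := by
      rcases Nat.eq_zero_or_pos j with rfl | hj0
      · simp [Nat.div_self (Nat.pos_of_ne_zero hd0)]
      · rw [orderOf_pow' ζ hj0.ne', hoζ]
    have hgd : Nat.gcd d j ∣ d := Nat.gcd_dvd_left d j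
    have hgd0 : 0 < Nat.gcd d j := Nat.gcd_pos_of_pos_left _ (Nat.pos_of_ne_zero hd0)
    have hdgd : d / Nat.gcd d j ∣ d := ⟨Nat.gcd d j, (Nat.div_mul_cancel hgd).symm⟩
    have hdg0 : d / Nat.gcd d j ≠ 0 :=
      (Nat.div_pos (Nat.le_of_dvd (Nat.pos_of_ne_zero hd0) hgd) hgd0).ne'
    have hcoords : Nat.Coprime (orderOf (ζ ^ j)) (orderOf (a ^ (r * v))) := by
      rw [hoζj, hoa]
      exact Nat.Coprime.coprime_dvd_left (hdgd.trans hd_n) hcop_ne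
    have hob : orderOf (ζ ^ j * a ^ (r * v)) = (d / Nat.gcd d j) * orderOf a := by
      rw [(Commute.all (ζ ^ j) (a ^ (r * v))).orderOf_mul_eq_mul_orderOf_of_coprime hcoords,
        hoζj, hoa]
    have hii : orderOf (ζ ^ j * a ^ (r * v)) = orderOf a * (d / Nat.gcd j d) := by
      rw [hob, Nat.gcd_comm d j, mul_comm]
    -- (i)
    have hvnv : v * (n / v) = n := Nat.mul_div_cancel' hvn
    have hi : (ζ ^ j * a ^ (r * v)) ^ (n / v) = a := by
      obtain ⟨k, hk⟩ := hvm
      have hnvk : n / v = d * k := by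
        apply Nat.div_eq_of_eq_mul_left hv0
        rw [← hdm, hk]; ring
      rw [mul_pow, ← pow_mul, ← pow_mul]
      have h1 : ζ ^ (j * (n / v)) = 1 := by
        have hre : j * (n / v) = d * (j * k) := by rw [hnvk]; ring
        rw [hre, pow_mul, hζ.pow_eq_one, one_pow]
      have h2 : a ^ (r * v * (n / v)) = a := by
        rw [mul_assoc, hvnv, ha_rn]
      rw [h1, h2, one_mul]
    have hmonic : (X ^ (t * v) - C (ζ ^ j * a ^ (r * v))).Monic := monic_X_pow_sub_C _ htv0
    -- irreducibility
    have hirr2 : Irreducible (X ^ (t * v) - C (ζ ^ j * a ^ (r * v))) := by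
      apply aux_key (t * v) F inferInstance inferInstance _ hb0
      · intro p hp hptv
        rcases (Nat.Prime.dvd_mul hp).mp hptv with hpt | hpv
        · -- p ∣ t
          have hP := pow_ne_of_irreducible_X_pow_sub_C hirr hpt hp.ne_one
          obtain ⟨h1, h2⟩ := aux_of_pow_ne hp ha hP
          have hpn : ¬ p ∣ n := by
            intro hpn
            have hdd : p ∣ Nat.gcd n (orderOf a * t) :=
              Nat.dvd_gcd hpn (Dvd.dvd.mul_left hpt (orderOf a))
            rw [hcop] at hdd
            exact hp.one_lt.ne' (Nat.dvd_one.mp hdd)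
          refine ⟨h1, ?_⟩
          rw [hob, Nat.factorization_mul hdg0 he0]
          simp only [Finsupp.coe_add, Pi.add_apply]
          have hz : (d / Nat.gcd d j).factorization p = 0 :=
            Nat.factorization_eq_zero_of_not_dvd fun hdvd => hpn (hdvd.trans (hdgd.trans hd_n))
          rw [hz, h2, zero_add]
        · -- p ∣ v
          have hpn : p ∣ n := hpv.trans hvn
          have hpq : p ∣ Fintype.card F - 1 :=
            (Finset.dvd_prod_of_mem _ (Nat.mem_primeFactors.mpr ⟨hp, hpn, hn.ne'⟩)).trans hrad
          have hpe : ¬ p ∣ orderOf a := by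
            intro hpe
            have hdd : p ∣ Nat.gcd n (orderOf a * t) :=
              Nat.dvd_gcd hpn (Dvd.dvd.mul_right hpe t)
            rw [hcop] at hdd
            exact hp.one_lt.ne' (Nat.dvd_one.mp hdd)
          have hpj : ¬ p ∣ j := by
            intro hpj
            have hdd : p ∣ Nat.gcd j v := Nat.dvd_gcd hpj hpv
            rw [hjv] at hdd
            exact hp.one_lt.ne' (Nat.dvd_one.mp hdd)
          have hpg : ¬ p ∣ Nat.gcd d j := fun h => hpj (h.trans (Nat.gcd_dvd_right d j))
          have hvdg : (d / Nat.gcd d j).factorization p = d.factorization p := by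
            rw [Nat.factorization_div hgd]
            simp [Nat.factorization_eq_zero_of_not_dvd hpg]
          have hvd : d.factorization p = (Fintype.card F - 1).factorization p := by
            have hdfac : d.factorization p
                = min (n.factorization p) ((Fintype.card F - 1).factorization p) := by
              rw [hd, Nat.factorization_gcd hn.ne' hq1]
              simp [Finsupp.inf_apply]
            have hpd_n : p * d ∣ n := by
              have h1 : p * d ∣ v * d := mul_dvd_mul_right hpv d
              have h2 : v * d ∣ n := by
                rw [← hdm, mul_comm d (n / d)]
                exact mul_dvd_mul_right hvm d
              exact h1.trans h2
            have hlt : d.factorization p < n.factorization p := by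
              have hle := (Nat.factorization_le_iff_dvd (Nat.mul_ne_zero hp.ne_zero hd0)
                hn.ne').mpr hpd_n p
              rw [Nat.factorization_mul hp.ne_zero hd0] at hle
              simp only [Finsupp.coe_add, Pi.add_apply] at hle
              rw [hp.factorization_self] at hle
              omega
            omega
          refine ⟨hpq, ?_⟩
          rw [hob, Nat.factorization_mul hdg0 he0]
          simp only [Finsupp.coe_add, Pi.add_apply]
          rw [hvdg, hvd, Nat.factorization_eq_zero_of_not_dvd hpe, add_zero]
      · intro h4'
        have h44 : (4 : ℕ) ∣ t * n := h4'.trans (mul_dvd_mul_left t hvn)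
        rcases h4 with hh | hh
        · exact absurd h44 hh
        · exact hh
    exact ⟨hmonic, hirr2, hi, hii⟩
  refine ⟨?_, main⟩
  -- the product identity
  set Jv : ℕ → Finset ℕ := fun v => (Finset.range d).filter (fun j => Nat.Coprime j v) with hJv
  have hmonR : (∏ v ∈ (n / d).divisors, ∏ j ∈ Jv v,
      (X ^ (t * v) - C (ζ ^ j * a ^ (r * v)))).Monic :=
    monic_prod_of_monic _ _ fun v hv =>
      monic_prod_of_monic _ _ fun j hj => (main v hv j hj).1
  have hmonL : (X ^ (t * n) - C a : F[X]).Monic :=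
    monic_X_pow_sub_C a (Nat.mul_ne_zero ht.ne' hn.ne')
  set f : (Σ _ : ℕ, ℕ) → F[X] :=
    fun σ => X ^ (t * σ.1) - C (ζ ^ σ.2 * a ^ (r * σ.1)) with hf
  set S : Finset (Σ _ : ℕ, ℕ) := ((n / d).divisors).sigma (fun v => Jv v) with hS
  have hsigma : (∏ v ∈ (n / d).divisors, ∏ j ∈ Jv v,
      (X ^ (t * v) - C (ζ ^ j * a ^ (r * v)))) = ∏ σ ∈ S, f σ :=
    Finset.prod_sigma' ((n / d).divisors) Jv
      (fun v j => (X ^ (t * v) - C (ζ ^ j * a ^ (r * v))))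
  have hmem : ∀ σ ∈ S, σ.1 ∈ (n / d).divisors ∧ σ.2 ∈ Jv σ.1 := by
    intro σ hσ
    exact Finset.mem_sigma.mp hσ
  have hdvdall : (∏ σ ∈ S, f σ) ∣ (X ^ (t * n) - C a) := by
    apply Finset.prod_dvd_of_coprime
    · -- pairwise coprime
      intro σ hσ τ hτ hne
      obtain ⟨hσ1, hσ2⟩ := hmem σ (Finset.mem_coe.mp hσ)
      obtain ⟨hτ1, hτ2⟩ := hmem τ (Finset.mem_coe.mp hτ)
      have hirrσ := (main σ.1 hσ1 σ.2 hσ2).2.1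
      have hirrτ := (main τ.1 hτ1 τ.2 hτ2).2.1
      have hmonσ := (main σ.1 hσ1 σ.2 hσ2).1
      have hmonτ := (main τ.1 hτ1 τ.2 hτ2).1
      show IsCoprime (f σ) (f τ)
      rw [Irreducible.coprime_iff_not_dvd hirrσ]
      intro hdvd
      have heq : f σ = f τ :=
        Polynomial.eq_of_monic_of_associated hmonσ hmonτ (hirrσ.associated_of_dvd hirrτ hdvd)
      have hv_eq : σ.1 = τ.1 := by
        have hdeg := congrArg natDegree heq
        rw [hf] at hdeg
        simp only at hdeg
        rw [natDegree_X_pow_sub_C, natDegree_X_pow_sub_C] at hdeg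
        exact Nat.eq_of_mul_eq_mul_left ht hdeg
      have hbeq : ζ ^ σ.2 * a ^ (r * τ.1) = ζ ^ τ.2 * a ^ (r * τ.1) := by
        have heq' := heq
        rw [hf] at heq'
        simp only at heq'
        rw [hv_eq] at heq'
        exact C_inj.mp (sub_right_inj.mp heq')
      have hzeq : ζ ^ σ.2 = ζ ^ τ.2 :=
        mul_right_cancel₀ (pow_ne_zero _ ha) hbeq
      have hjeq : σ.2 = τ.2 := by
        have hjd1 : σ.2 < d := Finset.mem_range.mp (Finset.mem_filter.mp hσ2).1
        have hjd2 : τ.2 < d := Finset.mem_range.mp (Finset.mem_filter.mp hτ2).1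
        exact hζ.pow_inj hjd1 hjd2 hzeq
      exact hne (Sigma.ext hv_eq (heq_of_eq hjeq))
    · -- each factor divides
      intro σ hσ
      obtain ⟨hσ1, hσ2⟩ := hmem σ hσ
      have hvm : σ.1 ∣ n / d := (Nat.mem_divisors.mp hσ1).1
      have hvn : σ.1 ∣ n := hvm.trans hmn
      have hvnv : σ.1 * (n / σ.1) = n := Nat.mul_div_cancel' hvn
      have hpow := (main σ.1 hσ1 σ.2 hσ2).2.2.1
      have hstep : f σ ∣ (X ^ (t * σ.1)) ^ (n / σ.1)
          - (C (ζ ^ σ.2 * a ^ (r * σ.1))) ^ (n / σ.1) := sub_dvd_pow_sub_pow _ _ _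
      rw [← pow_mul, ← C_pow, hpow] at hstep
      have hexp : t * σ.1 * (n / σ.1) = t * n := by rw [mul_assoc, hvnv]
      rwa [hexp] at hstep
  -- degree computation
  have hdegR : (∏ σ ∈ S, f σ).natDegree = t * n := by
    rw [← hsigma, natDegree_prod_of_monic _ _
      (fun v hv => monic_prod_of_monic _ _ fun j hj => (main v hv j hj).1)]
    have hterm : ∀ v ∈ (n / d).divisors,
        (∏ j ∈ Jv v, (X ^ (t * v) - C (ζ ^ j * a ^ (r * v)))).natDegree
          = t * (d * v.totient) := by
      intro v hv
      have hv0 : 0 < v := Nat.pos_of_mem_divisors hv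
      have hvm : v ∣ n / d := (Nat.mem_divisors.mp hv).1
      have hvn : v ∣ n := hvm.trans hmn
      have hradv : (∏ p ∈ v.primeFactors, p) ∣ d :=
        (Finset.prod_dvd_prod_of_subset _ _ _ (Nat.primeFactors_mono hvn hn.ne')).trans hrad_d
      have hcnt := aux_count d hv0.ne' hradv
      rw [natDegree_prod_of_monic _ _ (fun j hj => (main v hv j hj).1)]
      have : ∀ j ∈ Jv v, (X ^ (t * v) - C (ζ ^ j * a ^ (r * v))).natDegree = t * v :=
        fun j hj => natDegree_X_pow_sub_C
      rw [Finset.sum_congr rfl this, Finset.sum_const, smul_eq_mul]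
      calc (Jv v).card * (t * v) = t * ((Jv v).card * v) := by ring
        _ = t * (d * v.totient) := by rw [hJv, hcnt]
    rw [Finset.sum_congr rfl hterm, ← Finset.mul_sum, ← Finset.mul_sum, Nat.sum_totient, hdm]
  have hdegL : (X ^ (t * n) - C a : F[X]).natDegree = t * n := natDegree_X_pow_sub_C
  have hassoc : Associated (∏ σ ∈ S, f σ) (X ^ (t * n) - C a) :=
    associated_of_dvd_of_natDegree_le hdvdall hmonL.ne_zero (by rw [hdegR, hdegL])
  rw [hsigma]
  exact (Polynomial.eq_of_monic_of_associated (hsigma ▸ hmonR) hmonL hassoc).symm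
end

section
/- Let a ∈ F_q^* and let n be a positive integer with rad(n) ∣ q − 1 and such that 4 ∤ n or q ≡ 1 (mod 4). Write n = n_1 · n_2 where rad(n_1) ∣ ord(a) and gcd(n_2, ord(a)) = 1, and set d_1 := gcd(n_1, (q−1)/ord(a)) and d_2 := gcd(n_2, q−1). Then there exists b ∈ F_q with b^{d_1} = a such that the factorization of X^n − a into monic irreducible factors over F_q is ∏_{j=0}^{d_1−1} ∏_{v ∣ n_2/d_2} ∏_{0 ≤ i ≤ d_2−1, gcd(i,v)=1} (X^{(n_1/d_1)·v} − ζ_{d_2}^i (ζ_{d_1}^j b)^{rv}), where r is a positive integer with r = 1 if a = 1 and r·n_2 ≡ 1 (mod ord(a)·d_1) otherwise; moreover for all applicable j, v, i: (i) (ζ_{d_2}^i (ζ_{d_1}^j b)^{rv})^{(n_2/v)·d_1} = a, and (ii) ord(ζ_{d_2}^i (ζ_{d_1}^j b)^{rv}) = ord(a) · d_1 · d_2/gcd(i,d_2). -/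
open Polynomial

universe u

section Stmt9Helpers

lemma stmt9_cop_of_prime_dvd {x y z : ℕ} (h : ∀ p : ℕ, p.Prime → p ∣ y → p ∣ z)
    (hxz : Nat.Coprime x z) : Nat.Coprime x y := by
  by_contra hc
  obtain ⟨p, hp, hpd⟩ := Nat.exists_prime_and_dvd hc
  have h1 : p ∣ x := hpd.trans (Nat.gcd_dvd_left x y)
  have h2 : p ∣ z := h p hp (hpd.trans (Nat.gcd_dvd_right x y))
  have := Nat.dvd_gcd h1 h2
  rw [Nat.Coprime] at hxz
  rw [hxz] at this
  exact hp.one_lt.ne' (Nat.dvd_one.mp this)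

lemma stmt9_no_pth_root {F : Type*} [Field F] [Fintype F] {p : ℕ} (hp : p.Prime) {c : F}
    (hc : c ≠ 0) (hpe : p ∣ orderOf c) (hne : ¬ (p * orderOf c ∣ Fintype.card F - 1)) :
    ∀ b : F, b ^ p ≠ c := by
  intro b hb
  have hb0 : b ≠ 0 := by
    rintro rfl
    rw [zero_pow hp.ne_zero] at hb
    exact hc hb.symm
  have hbN : orderOf b ∣ Fintype.card F - 1 :=
    orderOf_dvd_of_pow_eq_one (FiniteField.pow_card_sub_one_eq_one b hb0)
  have hdvd : orderOf c ∣ orderOf b := hb ▸ orderOf_pow_dvd p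
  have hpb : p ∣ orderOf b := hpe.trans hdvd
  have h1 : orderOf (b ^ p) = orderOf b / p := orderOf_pow_of_dvd hp.ne_zero hpb
  rw [hb] at h1
  have h2 : orderOf b = p * orderOf c := by
    rw [h1]
    exact (Nat.mul_div_cancel' hpb).symm
  exact hne (h2 ▸ hbN)

lemma stmt9_count_coprime_range_mul (R k : ℕ) :
    ((Finset.range (k * R)).filter (Nat.Coprime R)).card = k * R.totient := by
  induction k with
  | zero => simp
  | succ k ih =>
    have hsplit : Finset.range ((k + 1) * R) =
        Finset.range (k * R) ∪ Finset.Ico (k * R) (k * R + R) := by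
      rw [Finset.range_eq_Ico, Finset.range_eq_Ico,
        Finset.Ico_union_Ico_eq_Ico (Nat.zero_le _) (Nat.le_add_right _ _)]
      congr 1
      ring
    have hdisj : Disjoint ((Finset.range (k * R)).filter (Nat.Coprime R))
        ((Finset.Ico (k * R) (k * R + R)).filter (Nat.Coprime R)) :=
      Finset.disjoint_filter_filter
        (by rw [Finset.range_eq_Ico]; exact Finset.Ico_disjoint_Ico_consecutive 0 (k*R) (k*R+R))
    rw [hsplit, Finset.filter_union, Finset.card_union_of_disjoint hdisj, ih,
      Nat.filter_coprime_Ico_eq_totient, add_mul, one_mul]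

lemma stmt9_totient_rad : ∀ v : ℕ, v ≠ 0 →
    v.totient * (∏ p ∈ v.primeFactors, p) = v * (∏ p ∈ v.primeFactors, p).totient := by
  intro v
  induction v using Nat.strong_induction_on with
  | _ v IH =>
  intro hv
  by_cases hs : Squarefree v
  · rw [Nat.prod_primeFactors_of_squarefree hs, mul_comm]
  · rw [Nat.squarefree_iff_prime_squarefree] at hs
    push_neg at hs
    obtain ⟨p, hp, hpp⟩ := hs
    have hp' : p.Prime := hp
    obtain ⟨w, hw⟩ := hpp
    have hv' : v = p * (p * w) := by rw [hw]; ring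
    have hpw : p * w ≠ 0 := by rintro h; exact hv (by rw [hv', h, mul_zero])
    have hw0 : w ≠ 0 := fun h => hpw (by rw [h, mul_zero])
    have hmem : p ∈ (p * w).primeFactors :=
      Nat.mem_primeFactors.mpr ⟨hp', dvd_mul_right p w, hpw⟩
    have hpf : v.primeFactors = (p * w).primeFactors := by
      rw [hv', Nat.primeFactors_mul hp'.ne_zero hpw, hp'.primeFactors,
        Finset.union_eq_right.mpr (Finset.singleton_subset_iff.mpr hmem)]
    have hlt : p * w < v := by
      rw [hv']
      exact lt_mul_of_one_lt_left (Nat.pos_of_ne_zero hpw) hp'.one_lt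
    have htot : v.totient = p * (p * w).totient := by
      rw [hv', Nat.totient_mul_of_prime_of_dvd hp' (dvd_mul_right p w)]
    rw [htot, hpf, hv', mul_assoc, IH (p * w) hlt hpw, ← mul_assoc]

lemma stmt9_coprime_rad_iff {v : ℕ} (hv : v ≠ 0) (i : ℕ) :
    Nat.Coprime i (∏ p ∈ v.primeFactors, p) ↔ Nat.Coprime i v := by
  have hR0 : (∏ p ∈ v.primeFactors, p) ≠ 0 :=
    Finset.prod_ne_zero_iff.mpr fun p hp => (Nat.prime_of_mem_primeFactors hp).ne_zero
  have hRpf : (∏ p ∈ v.primeFactors, p).primeFactors = v.primeFactors :=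
    Nat.primeFactors_prod fun p hp => Nat.prime_of_mem_primeFactors hp
  constructor
  · intro h
    exact stmt9_cop_of_prime_dvd (fun p pp hpv => Finset.dvd_prod_of_mem _
      (Nat.mem_primeFactors.mpr ⟨pp, hpv, hv⟩)) h
  · intro h
    refine stmt9_cop_of_prime_dvd (fun p pp hpR => ?_) h
    have : p ∈ v.primeFactors := by
      rw [← hRpf]; exact Nat.mem_primeFactors.mpr ⟨pp, hpR, hR0⟩
    exact (Nat.mem_primeFactors.mp this).2.1

lemma stmt9_card_filter_coprime {d v : ℕ} (hv : v ≠ 0)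
    (hpr : ∀ p : ℕ, p.Prime → p ∣ v → p ∣ d) :
    ((Finset.range d).filter (fun i => Nat.Coprime i v)).card * v = d * v.totient := by
  set R := ∏ p ∈ v.primeFactors, p with hR
  have hRprimes : ∀ p ∈ v.primeFactors, Prime p :=
    fun p hp => (Nat.prime_of_mem_primeFactors hp).prime
  have hRd : R ∣ d := Finset.prod_primes_dvd d hRprimes
    (fun p hp => hpr p (Nat.prime_of_mem_primeFactors hp) (Nat.mem_primeFactors.mp hp).2.1)
  have hfilt : (Finset.range d).filter (fun i => Nat.Coprime i v) =
      (Finset.range d).filter (Nat.Coprime R) := by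
    apply Finset.filter_congr
    intro i _
    exact ⟨fun h => ((stmt9_coprime_rad_iff hv i).mpr h).symm,
      fun h => (stmt9_coprime_rad_iff hv i).mp h.symm⟩
  obtain ⟨k, hk⟩ := hRd
  rw [hfilt, hk, mul_comm R k, stmt9_count_coprime_range_mul]
  have ht := stmt9_totient_rad v hv
  rw [← hR] at ht
  calc k * R.totient * v = k * (v * R.totient) := by ring
  _ = k * (v.totient * R) := by rw [ht]
  _ = k * R * v.totient := by ring

open IntermediateField in
theorem stmt9_ff_irr : ∀ (m : ℕ) (K : Type u) [Field K] [Fintype K] (c : K),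
    (∀ p : ℕ, p.Prime → p ∣ m → ∀ b : K, b ^ p ≠ c) →
    (4 ∣ m → Fintype.card K % 4 = 1) → m ≠ 0 →
    Irreducible (X ^ m - C c) := by
  intro m
  induction m using induction_on_primes with
  | zero => intro K _ _ c _ _ h; exact absurd rfl h
  | one => intro K _ _ c _ _ _; simpa using irreducible_X_sub_C c
  | prime_mul p m hp IH =>
    intro K _ _ c hc h4 hm0
    have hm' : m ≠ 0 := by rintro rfl; exact hm0 (mul_zero p)
    rw [mul_comm]
    apply X_pow_mul_sub_C_irreducible
      (X_pow_sub_C_irreducible_of_prime hp (hc p hp (dvd_mul_right p m)))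
    intro E _ _ x hx
    have hint : IsIntegral K x := not_not.mp fun h ↦ by
      simpa only [degree_zero, degree_X_pow_sub_C hp.pos, WithBot.natCast_ne_bot]
        using congr_arg degree (hx.symm.trans (dif_neg h))
    haveI : FiniteDimensional K K⟮x⟯ := adjoin.finiteDimensional hint
    haveI : Finite (K⟮x⟯ : Type u) := Module.finite_of_finite K
    haveI : Fintype (K⟮x⟯ : Type u) := Fintype.ofFinite _
    have hdeg : (minpoly K x).natDegree = p := by rw [hx, natDegree_X_pow_sub_C]
    have hcard : Fintype.card (K⟮x⟯ : Type u) = Fintype.card K ^ p := by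
      rw [Module.card_eq_pow_finrank (K := K) (V := (K⟮x⟯ : Type u)), adjoin.finrank hint, hdeg]
    have hnormgen : Algebra.norm K (AdjoinSimple.gen K x) = (-1) ^ p * (- c) := by
      rw [← adjoin.powerBasis_gen hint, Algebra.PowerBasis.norm_gen_eq_coeff_zero_minpoly,
        adjoin.powerBasis_gen hint, minpoly_gen, hx]
      congr 1
      · rw [adjoin.powerBasis_dim, hdeg]
      · rw [coeff_sub, coeff_X_pow, if_neg (fun h => hp.ne_zero h.symm), coeff_C_zero, zero_sub]
    apply IH
    · intro ℓ hℓ hℓm b hb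
      have hnb : (Algebra.norm K b) ^ ℓ = (-1) ^ p * (- c) := by
        rw [← map_pow, hb, hnormgen]
      rcases hp.eq_two_or_odd' with hp2 | hpodd
      · subst hp2
        rw [show ((-1 : K)) ^ 2 * (-c) = -c by ring] at hnb
        rcases hℓ.eq_two_or_odd' with hl2 | hlodd
        · subst hl2
          have h44 : (4:ℕ) ∣ 2 * m := by
            obtain ⟨k, rfl⟩ := hℓm; exact ⟨k, by ring⟩
          obtain ⟨w, hw⟩ := FiniteField.isSquare_neg_one_iff.mpr
            (by rw [h4 h44]; decide)
          exact hc 2 Nat.prime_two (hℓm.mul_left 2) (w * Algebra.norm K b)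
            (by rw [mul_pow, hnb, pow_two, ← hw]; ring)
        · exact hc ℓ hℓ (hℓm.mul_left 2) (- Algebra.norm K b)
            (by rw [hlodd.neg_pow, hnb, neg_neg])
      · exact hc ℓ hℓ (hℓm.mul_left p) (Algebra.norm K b)
          (by rw [hnb, hpodd.neg_one_pow]; ring)
    · intro h4m
      rw [hcard, Nat.pow_mod, h4 (h4m.mul_left p), Nat.one_pow]
    · exact hm'

lemma stmt9_triple_prod_eq {β : Type*} [CommMonoid β] (d₁ d₂ N : ℕ) (G : ℕ → ℕ → ℕ → β) :
    ∏ x ∈ (Finset.range d₁ ×ˢ N.divisors ×ˢ Finset.range d₂).filter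
        (fun x => Nat.Coprime x.2.2 x.2.1), G x.1 x.2.1 x.2.2 =
    ∏ j ∈ Finset.range d₁, ∏ v ∈ N.divisors,
      ∏ i ∈ (Finset.range d₂).filter (fun i => Nat.Coprime i v), G j v i := by
  rw [Finset.prod_filter, Finset.prod_product]
  refine Finset.prod_congr rfl fun j _ => ?_
  rw [Finset.prod_product]
  refine Finset.prod_congr rfl fun v _ => ?_
  rw [Finset.prod_filter]

lemma stmt9_triple_sum_eq (d₁ d₂ N : ℕ) (G : ℕ → ℕ → ℕ → ℕ) :
    ∑ x ∈ (Finset.range d₁ ×ˢ N.divisors ×ˢ Finset.range d₂).filter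
        (fun x => Nat.Coprime x.2.2 x.2.1), G x.1 x.2.1 x.2.2 =
    ∑ j ∈ Finset.range d₁, ∑ v ∈ N.divisors,
      ∑ i ∈ (Finset.range d₂).filter (fun i => Nat.Coprime i v), G j v i := by
  rw [Finset.sum_filter, Finset.sum_product]
  refine Finset.sum_congr rfl fun j _ => ?_
  rw [Finset.sum_product]
  refine Finset.sum_congr rfl fun v _ => ?_
  rw [Finset.sum_filter]

end Stmt9Helpers

/-- Let `a ∈ F_q^*` and `n` a positive integer with `rad n ∣ q - 1` and
(`4 ∤ n` or `q ≡ 1 (mod 4)`).  Write `n = n₁ n₂` with `rad n₁ ∣ ord a` and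
`gcd(n₂, ord a) = 1`, and set `d₁ := gcd(n₁, (q - 1)/ord a)`, `d₂ := gcd(n₂, q - 1)`.
Then there is `b ∈ F_q` with `b ^ d₁ = a` such that the factorization of `X ^ n - a` into
monic irreducible factors over `F_q` is
`∏_{j<d₁} ∏_{v ∣ n₂/d₂} ∏_{i<d₂, gcd(i,v)=1} (X^{(n₁/d₁) v} - ζ_{d₂}^i (ζ_{d₁}^j b)^{r v})`,
where `r = 1` if `a = 1` and `r n₂ ≡ 1 (mod ord a * d₁)` otherwise; moreover
(i) `(ζ_{d₂}^i (ζ_{d₁}^j b)^{r v})^{(n₂/v) d₁} = a` and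
(ii) `ord (ζ_{d₂}^i (ζ_{d₁}^j b)^{r v}) = ord a * d₁ * d₂ / gcd(i, d₂)`. -/
theorem stmt9 (q : ℕ) (F : Type*) [Field F] [Fintype F] (hF : Fintype.card F = q)
    (a : F) (ha : a ≠ 0)
    (n n₁ n₂ : ℕ) (hn : 0 < n) (hn12 : n = n₁ * n₂)
    (hrad : (∏ p ∈ n.primeFactors, p) ∣ q - 1)
    (h4 : ¬ 4 ∣ n ∨ q % 4 = 1)
    (hrad1 : (∏ p ∈ n₁.primeFactors, p) ∣ orderOf a)
    (hcop2 : Nat.Coprime n₂ (orderOf a))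
    (d₁ d₂ : ℕ) (hd1 : d₁ = Nat.gcd n₁ ((q - 1) / orderOf a)) (hd2 : d₂ = Nat.gcd n₂ (q - 1))
    (ζ₁ ζ₂ : F) (hζ1 : IsPrimitiveRoot ζ₁ d₁) (hζ2 : IsPrimitiveRoot ζ₂ d₂) :
    ∃ b : F, b ^ d₁ = a ∧
      ∀ r : ℕ, 0 < r → (a = 1 → r = 1) → (a ≠ 1 → r * n₂ ≡ 1 [MOD orderOf a * d₁]) →
        ((X ^ n - C a : Polynomial F) =
          ∏ j ∈ Finset.range d₁, ∏ v ∈ (n₂ / d₂).divisors,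
            ∏ i ∈ (Finset.range d₂).filter (fun i => Nat.Coprime i v),
              (X ^ ((n₁ / d₁) * v) - C (ζ₂ ^ i * (ζ₁ ^ j * b) ^ (r * v)))) ∧
        ∀ j ∈ Finset.range d₁, ∀ v ∈ (n₂ / d₂).divisors,
          ∀ i ∈ (Finset.range d₂).filter (fun i => Nat.Coprime i v),
            (X ^ ((n₁ / d₁) * v) - C (ζ₂ ^ i * (ζ₁ ^ j * b) ^ (r * v))).Monic ∧
            Irreducible (X ^ ((n₁ / d₁) * v) - C (ζ₂ ^ i * (ζ₁ ^ j * b) ^ (r * v))) ∧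
            (ζ₂ ^ i * (ζ₁ ^ j * b) ^ (r * v)) ^ ((n₂ / v) * d₁) = a ∧
            orderOf (ζ₂ ^ i * (ζ₁ ^ j * b) ^ (r * v)) =
              orderOf a * d₁ * (d₂ / Nat.gcd i d₂) := by
  haveI : DecidableEq F := Classical.decEq F
  have hq2 : 2 ≤ q := hF ▸ Fintype.one_lt_card
  have hN0 : q - 1 ≠ 0 := by omega
  have hNcard : Fintype.card Fˣ = q - 1 := by rw [Fintype.card_units, hF]
  set t := orderOf a with hta
  have htu : t = orderOf (Units.mk0 a ha) := by
    rw [hta, ← orderOf_units, Units.val_mk0]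
  have ht0 : t ≠ 0 := by
    rw [htu]
    exact (orderOf_pos _).ne'
  have htN : t ∣ q - 1 := by
    rw [htu, ← hNcard]
    exact orderOf_dvd_card
  have hn₁0 : n₁ ≠ 0 := by rintro rfl; rw [hn12] at hn; simp at hn
  have hn₂0 : n₂ ≠ 0 := by rintro rfl; rw [hn12] at hn; simp at hn
  have hn0 : n ≠ 0 := hn.ne'
  have hd₁0 : d₁ ≠ 0 := by
    rintro h
    rw [hd1] at h
    exact hn₁0 (Nat.eq_zero_of_gcd_eq_zero_left h)
  have hd₂0 : d₂ ≠ 0 := by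
    rintro h
    rw [hd2] at h
    exact hn₂0 (Nat.eq_zero_of_gcd_eq_zero_left h)
  have hd₁n₁ : d₁ ∣ n₁ := hd1 ▸ Nat.gcd_dvd_left _ _
  have hd₂n₂ : d₂ ∣ n₂ := hd2 ▸ Nat.gcd_dvd_left _ _
  have hd₁Nt : d₁ ∣ (q - 1) / t := hd1 ▸ Nat.gcd_dvd_right _ _
  have htd₁N : t * d₁ ∣ q - 1 := by
    have := Nat.mul_dvd_mul_left t hd₁Nt
    rwa [Nat.mul_div_cancel' htN] at this
  have htd₁0 : t * d₁ ≠ 0 := Nat.mul_ne_zero ht0 hd₁0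
  have hprime_n₁_t : ∀ p : ℕ, p.Prime → p ∣ n₁ → p ∣ t := fun p pp hpn₁ =>
    dvd_trans (Finset.dvd_prod_of_mem _ (Nat.mem_primeFactors.mpr ⟨pp, hpn₁, hn₁0⟩)) hrad1
  have hprime_d₁_t : ∀ p : ℕ, p.Prime → p ∣ d₁ → p ∣ t := fun p pp hpd =>
    hprime_n₁_t p pp (hpd.trans hd₁n₁)
  have hprime_n_N : ∀ p : ℕ, p.Prime → p ∣ n → p ∣ q - 1 := fun p pp hpn =>
    dvd_trans (Finset.dvd_prod_of_mem _ (Nat.mem_primeFactors.mpr ⟨pp, hpn, hn0⟩)) hrad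
  have hprime_n₂_d₂ : ∀ p : ℕ, p.Prime → p ∣ n₂ → p ∣ d₂ := fun p pp hpn₂ => by
    rw [hd2]
    exact Nat.dvd_gcd hpn₂ (hprime_n_N p pp (hn12 ▸ hpn₂.mul_left n₁))
  have hcop_n₂d₁ : Nat.Coprime n₂ d₁ := stmt9_cop_of_prime_dvd hprime_d₁_t hcop2
  have hcop_n₂td₁ : Nat.Coprime n₂ (t * d₁) := Nat.Coprime.mul_right hcop2 hcop_n₂d₁
  have hcop_d₁d₂ : Nat.Coprime d₁ d₂ :=
    ((Nat.Coprime.coprime_dvd_left hd₂n₂ hcop_n₂d₁)).symm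
  have hζ₁ne : ζ₁ ≠ 0 := hζ1.ne_zero hd₁0
  have hζ₂ne : ζ₂ ≠ 0 := hζ2.ne_zero hd₂0
  have hn₁d₁0 : n₁ / d₁ ≠ 0 :=
    (Nat.div_pos (Nat.le_of_dvd (Nat.pos_of_ne_zero hn₁0) hd₁n₁)
      (Nat.pos_of_ne_zero hd₁0)).ne'
  -- construct b
  obtain ⟨g, hg⟩ := IsCyclic.exists_generator (α := Fˣ)
  have hgord : orderOf g = q - 1 := by
    rw [orderOf_eq_card_of_forall_mem_zpowers hg, Nat.card_eq_fintype_card, hNcard]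
  obtain ⟨s, hs⟩ : ∃ s : ℕ, g ^ s = Units.mk0 a ha := by
    have := hg (Units.mk0 a ha)
    rwa [← mem_powers_iff_mem_zpowers, Submonoid.mem_powers_iff] at this
  have hts : t = (q - 1) / Nat.gcd (q - 1) s := by
    rw [htu, ← hs, orderOf_pow, hgord]
  have hgcdNs : Nat.gcd (q - 1) s = (q - 1) / t := by
    rw [hts, Nat.div_div_self (Nat.gcd_dvd_left _ _) hN0]
  have hNt0 : (q - 1) / t ≠ 0 := by
    rw [← hgcdNs]
    intro h
    exact hN0 (Nat.eq_zero_of_gcd_eq_zero_left h)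
  have hNts : (q - 1) / t ∣ s := hgcdNs ▸ Nat.gcd_dvd_right (q - 1) s
  set k := s / ((q - 1) / t) with hk
  have hks : s = (q - 1) / t * k := (Nat.mul_div_cancel' hNts).symm
  have hcop_tk : Nat.gcd t k = 1 := by
    have h1 : (q - 1) / t * t = q - 1 := Nat.div_mul_cancel htN
    have h2 : Nat.gcd ((q - 1) / t * t) ((q - 1) / t * k) = (q - 1) / t * Nat.gcd t k :=
      Nat.gcd_mul_left _ _ _
    rw [h1, ← hks, hgcdNs] at h2
    have h3 : (q - 1) / t * 1 = (q - 1) / t * Nat.gcd t k := by rw [mul_one]; exact h2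
    exact (Nat.eq_of_mul_eq_mul_left (Nat.pos_of_ne_zero hNt0) h3).symm
  have hcop_kt : Nat.Coprime k t := Nat.coprime_comm.mp hcop_tk
  have hcop_ktd₁ : Nat.Coprime k (t * d₁) :=
    Nat.Coprime.mul_right hcop_kt (stmt9_cop_of_prime_dvd hprime_d₁_t hcop_kt)
  set B := g ^ (k * ((q - 1) / (t * d₁))) with hB
  have hNtd₁ : (q - 1) / (t * d₁) * d₁ = (q - 1) / t := by
    rw [← Nat.div_div_eq_div_mul, Nat.div_mul_cancel hd₁Nt]
  have hBd₁ : B ^ d₁ = Units.mk0 a ha := by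
    rw [hB, ← pow_mul, ← hs, hks]
    congr 1
    rw [mul_assoc, hNtd₁, mul_comm]
  have hBord : orderOf B = t * d₁ := by
    rw [hB, orderOf_pow, hgord]
    have hdecomp : q - 1 = (q - 1) / (t * d₁) * (t * d₁) := (Nat.div_mul_cancel htd₁N).symm
    have h5 : Nat.gcd ((q - 1) / (t * d₁) * (t * d₁)) ((q - 1) / (t * d₁) * k) =
        (q - 1) / (t * d₁) := by
      rw [Nat.gcd_mul_left, Nat.Coprime.gcd_eq_one hcop_ktd₁.symm, mul_one]
    rw [mul_comm ((q - 1) / (t * d₁)) k] at h5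
    rw [← hdecomp] at h5
    rw [h5, Nat.div_div_self htd₁N hN0]
  set b : F := ((B : Fˣ) : F) with hbdef
  have hb : b ^ d₁ = a := by
    have h := congrArg (Units.val) hBd₁
    rwa [Units.val_pow_eq_pow_val, Units.val_mk0] at h
  have hbord : orderOf b = t * d₁ := by
    rw [hbdef, orderOf_units, hBord]
  have hbne : b ≠ 0 := Units.ne_zero B
  refine ⟨b, hb, ?_⟩
  intro r hr hr1 hrmod
  -- coprimality of r
  have hcop_r : Nat.Coprime r (t * d₁) := by
    by_cases hA : a = 1
    · rw [hr1 hA]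
      exact Nat.coprime_one_left _
    · have hmod := hrmod hA
      rcases Nat.lt_or_ge (t * d₁) 2 with hlt | hge
      · interval_cases h : t * d₁
        · exact absurd rfl htd₁0
        · exact Nat.coprime_one_right r
      · have h1m : 1 % (t * d₁) = 1 := Nat.mod_eq_of_lt hge
        rw [Nat.ModEq, h1m] at hmod
        have hdm := Nat.div_add_mod (r * n₂) (t * d₁)
        have hg1 : Nat.gcd r (t * d₁) ∣ r * n₂ := (Nat.gcd_dvd_left _ _).mul_right n₂
        have hg2 : Nat.gcd r (t * d₁) ∣ t * d₁ * (r * n₂ / (t * d₁)) :=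
          (Nat.gcd_dvd_right _ _).mul_right _
        have hsub : r * n₂ - t * d₁ * (r * n₂ / (t * d₁)) = 1 := by omega
        have := Nat.dvd_sub hg1 hg2
        rw [hsub] at this
        exact Nat.dvd_one.mp this
  have harn : a ^ (r * n₂) = a := by
    by_cases hA : a = 1
    · rw [hA, one_pow]
    · have hmod : r * n₂ ≡ 1 [MOD t] := (hrmod hA).of_dvd (dvd_mul_right t d₁)
      have hu : (Units.mk0 a ha) ^ (r * n₂) = (Units.mk0 a ha) ^ 1 := by
        rw [pow_eq_pow_iff_modEq, ← htu]
        exact hmod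
      have := congrArg Units.val hu
      rwa [Units.val_pow_eq_pow_val, Units.val_pow_eq_pow_val, Units.val_mk0, pow_one] at this
  -- the key per-factor facts
  have key : ∀ j, j < d₁ → ∀ v, v ∈ (n₂ / d₂).divisors → ∀ i, i < d₂ → Nat.Coprime i v →
      ((X ^ ((n₁ / d₁) * v) - C (ζ₂ ^ i * (ζ₁ ^ j * b) ^ (r * v))).Monic ∧
       Irreducible (X ^ ((n₁ / d₁) * v) - C (ζ₂ ^ i * (ζ₁ ^ j * b) ^ (r * v))) ∧
       (ζ₂ ^ i * (ζ₁ ^ j * b) ^ (r * v)) ^ ((n₂ / v) * d₁) = a ∧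
       orderOf (ζ₂ ^ i * (ζ₁ ^ j * b) ^ (r * v)) = t * d₁ * (d₂ / Nat.gcd i d₂) ∧
       (X ^ ((n₁ / d₁) * v) - C (ζ₂ ^ i * (ζ₁ ^ j * b) ^ (r * v))) ∣ (X ^ n - C a)) := by
    intro j hj v hv i hi hiv
    obtain ⟨hvdvd, hNd0⟩ := Nat.mem_divisors.mp hv
    have hv0 : v ≠ 0 := (Nat.pos_of_mem_divisors hv).ne'
    have hvn₂ : v ∣ n₂ := hvdvd.trans (Nat.div_dvd_of_dvd hd₂n₂)
    obtain ⟨w, hw⟩ := hvdvd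
    have hn₂eq : n₂ = d₂ * (v * w) := by rw [← hw, Nat.mul_div_cancel' hd₂n₂]
    have hn₂v : n₂ / v = d₂ * w := by
      rw [hn₂eq, show d₂ * (v * w) = v * (d₂ * w) by ring,
        Nat.mul_div_cancel_left _ (Nat.pos_of_ne_zero hv0)]
    have hcop_v_td₁ : Nat.Coprime v (t * d₁) := Nat.Coprime.coprime_dvd_left hvn₂ hcop_n₂td₁
    have hcop_rv : Nat.Coprime (r * v) (t * d₁) := Nat.Coprime.mul hcop_r hcop_v_td₁
    -- order of u := ζ₁ ^ j * b
    have hbtord : orderOf (b ^ t) = d₁ := by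
      rw [orderOf_pow_of_dvd ht0 (by rw [hbord]; exact dvd_mul_right t d₁), hbord,
        Nat.mul_div_cancel_left _ (Nat.pos_of_ne_zero ht0)]
    have hbt : IsPrimitiveRoot (b ^ t) d₁ := by
      have := IsPrimitiveRoot.orderOf (b ^ t)
      rwa [hbtord] at this
    haveI : NeZero d₁ := ⟨hd₁0⟩
    obtain ⟨kk, hkklt, hkkeq⟩ := hbt.eq_pow_of_pow_eq_one hζ1.pow_eq_one
    have huexp : b ^ (t * kk * j + 1) = ζ₁ ^ j * b := by
      rw [← hkkeq, ← pow_mul, ← pow_mul, pow_succ, mul_assoc]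
    have hcop_exp1 : Nat.Coprime (t * kk * j + 1) t := by
      have h1 : Nat.Coprime (1 + kk * j * t) t :=
        (Nat.coprime_add_mul_right_left 1 t (kk * j)).mpr (Nat.coprime_one_left t)
      have h2 : t * kk * j + 1 = 1 + kk * j * t := by ring
      rwa [h2]
    have hcop_exp : Nat.Coprime (t * kk * j + 1) (t * d₁) :=
      Nat.Coprime.mul_right hcop_exp1 (stmt9_cop_of_prime_dvd hprime_d₁_t hcop_exp1)
    have huord : orderOf (ζ₁ ^ j * b) = t * d₁ := by
      rw [← huexp, Nat.Coprime.orderOf_pow (by rw [hbord]; exact hcop_exp.symm), hbord]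
    have hud₁ : (ζ₁ ^ j * b) ^ d₁ = a := by
      rw [mul_pow, ← pow_mul, mul_comm j d₁, pow_mul, hζ1.pow_eq_one, one_pow, one_mul, hb]
    have hordu_rv : orderOf ((ζ₁ ^ j * b) ^ (r * v)) = t * d₁ := by
      rw [Nat.Coprime.orderOf_pow (by rw [huord]; exact hcop_rv.symm), huord]
    have hM : v * (n₂ / v) = n₂ := Nat.mul_div_cancel' hvn₂
    -- (i)
    have hii : (ζ₂ ^ i * (ζ₁ ^ j * b) ^ (r * v)) ^ ((n₂ / v) * d₁) = a := by
      rw [mul_pow, ← pow_mul, ← pow_mul]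
      have e1 : i * (n₂ / v * d₁) = d₂ * (w * d₁ * i) := by rw [hn₂v]; ring
      have e2 : r * v * (n₂ / v * d₁) = d₁ * (r * n₂) := by
        conv_rhs => rw [← hM]
        ring
      rw [e1, e2, pow_mul, hζ2.pow_eq_one, one_pow, one_mul, pow_mul, hud₁]
      exact harn
    -- (ii)
    have hG0 : Nat.gcd i d₂ ≠ 0 := fun h => hd₂0 (Nat.eq_zero_of_gcd_eq_zero_right h)
    have hD2d : d₂ / Nat.gcd i d₂ ∣ d₂ := Nat.div_dvd_of_dvd (Nat.gcd_dvd_right i d₂)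
    have hD20 : d₂ / Nat.gcd i d₂ ≠ 0 :=
      (Nat.div_pos (Nat.le_of_dvd (Nat.pos_of_ne_zero hd₂0) (Nat.gcd_dvd_right i d₂))
        (Nat.pos_of_ne_zero hG0)).ne'
    have hordc : orderOf (ζ₂ ^ i * (ζ₁ ^ j * b) ^ (r * v)) =
        t * d₁ * (d₂ / Nat.gcd i d₂) := by
      by_cases hi0 : i = 0
      · subst hi0
        rw [pow_zero, one_mul, Nat.gcd_zero_left, Nat.div_self (Nat.pos_of_ne_zero hd₂0),
          mul_one]
        exact hordu_rv
      · have hord2 : orderOf (ζ₂ ^ i) = d₂ / Nat.gcd i d₂ := by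
          rw [orderOf_pow' ζ₂ hi0, ← hζ2.eq_orderOf, Nat.gcd_comm]
        have hcopord : Nat.Coprime (orderOf (ζ₂ ^ i)) (orderOf ((ζ₁ ^ j * b) ^ (r * v))) := by
          rw [hord2, hordu_rv]
          exact Nat.Coprime.coprime_dvd_left (hD2d.trans hd₂n₂) hcop_n₂td₁
        rw [(Commute.all _ _).orderOf_mul_eq_mul_orderOf_of_coprime hcopord, hord2, hordu_rv]
        ring
    -- basic poly facts
    have hcne : ζ₂ ^ i * (ζ₁ ^ j * b) ^ (r * v) ≠ 0 :=
      mul_ne_zero (pow_ne_zero _ hζ₂ne)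
        (pow_ne_zero _ (mul_ne_zero (pow_ne_zero _ hζ₁ne) hbne))
    have hm0 : (n₁ / d₁) * v ≠ 0 := Nat.mul_ne_zero hn₁d₁0 hv0
    have hmonic : (X ^ ((n₁ / d₁) * v) - C (ζ₂ ^ i * (ζ₁ ^ j * b) ^ (r * v))).Monic :=
      monic_X_pow_sub_C _ hm0
    have hmn : (n₁ / d₁) * v * ((n₂ / v) * d₁) = n := by
      rw [hn12]
      calc (n₁ / d₁) * v * ((n₂ / v) * d₁) = (d₁ * (n₁ / d₁)) * (v * (n₂ / v)) := by ring
      _ = n₁ * n₂ := by rw [Nat.mul_div_cancel' hd₁n₁, hM]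
    have hdvdS : (X ^ ((n₁ / d₁) * v) - C (ζ₂ ^ i * (ζ₁ ^ j * b) ^ (r * v))) ∣
        (X ^ n - C a) := by
      have hsub := sub_dvd_pow_sub_pow (X ^ ((n₁ / d₁) * v) : F[X])
        (C (ζ₂ ^ i * (ζ₁ ^ j * b) ^ (r * v))) ((n₂ / v) * d₁)
      rwa [← pow_mul, ← C_pow, hmn, hii] at hsub
    -- irreducibility
    have hirr : Irreducible (X ^ ((n₁ / d₁) * v) - C (ζ₂ ^ i * (ζ₁ ^ j * b) ^ (r * v))) := by
      apply stmt9_ff_irr _ F _ ?_ ?_ hm0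
      · intro p pp hpm
        have hBnd : ∀ (hpe : p ∣ orderOf (ζ₂ ^ i * (ζ₁ ^ j * b) ^ (r * v)))
            (hne : ¬ (p * orderOf (ζ₂ ^ i * (ζ₁ ^ j * b) ^ (r * v)) ∣ q - 1)),
            ∀ b' : F, b' ^ p ≠ ζ₂ ^ i * (ζ₁ ^ j * b) ^ (r * v) := by
          intro hpe hne
          exact stmt9_no_pth_root pp hcne hpe (by rwa [hF])
        rcases (Nat.Prime.dvd_mul pp).mp hpm with hpA | hpB
        · -- p divides n₁ / d₁
          have hpn₁ : p ∣ n₁ := hpA.trans (Nat.div_dvd_of_dvd hd₁n₁)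
          have hpt : p ∣ t := hprime_n₁_t p pp hpn₁
          have hpD2 : ¬ p ∣ (d₂ / Nat.gcd i d₂) := by
            intro hcon
            have hpn₂ : p ∣ n₂ := (hcon.trans hD2d).trans hd₂n₂
            have := Nat.dvd_gcd hpn₂ hpt
            rw [Nat.Coprime.gcd_eq_one hcop2] at this
            exact pp.one_lt.ne' (Nat.dvd_one.mp this)
          refine hBnd ?_ ?_
          · rw [hordc]
            exact Dvd.dvd.mul_right (hpt.mul_right d₁) _
          · intro hcon
            rw [hordc] at hcon
            -- factorization contradiction
            have he0 : t * d₁ * (d₂ / Nat.gcd i d₂) ≠ 0 :=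
              Nat.mul_ne_zero htd₁0 hD20
            have hfle := Finsupp.le_def.mp
              ((Nat.factorization_le_iff_dvd (Nat.mul_ne_zero pp.ne_zero he0) hN0).mpr hcon) p
            have hexp : (p * (t * d₁ * (d₂ / Nat.gcd i d₂))).factorization p =
                1 + (t.factorization p + d₁.factorization p +
                  (d₂ / Nat.gcd i d₂).factorization p) := by
              rw [Nat.factorization_mul pp.ne_zero he0, Finsupp.add_apply,
                Nat.factorization_mul htd₁0 hD20, Finsupp.add_apply,
                Nat.factorization_mul ht0 hd₁0, Finsupp.add_apply,
                Nat.Prime.factorization_self pp]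
            have hD2f0 : (d₂ / Nat.gcd i d₂).factorization p = 0 :=
              Nat.factorization_eq_zero_of_not_dvd hpD2
            have hfd : d₁.factorization p = ((q - 1) / t).factorization p := by
              have hmin : d₁.factorization p =
                  min (n₁.factorization p) (((q - 1) / t).factorization p) := by
                rw [hd1, Nat.factorization_gcd hn₁0 hNt0, Finsupp.inf_apply]
              have h1 : 1 ≤ (n₁ / d₁).factorization p :=
                Nat.Prime.factorization_pos_of_dvd pp hn₁d₁0 hpA
              have h2 : (n₁ / d₁).factorization p =
                  n₁.factorization p - d₁.factorization p := by
                rw [Nat.factorization_div hd₁n₁, Finsupp.tsub_apply]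
              omega
            have hft : ((q - 1) / t).factorization p =
                (q - 1).factorization p - t.factorization p := by
              rw [Nat.factorization_div htN, Finsupp.tsub_apply]
            have htle : t.factorization p ≤ (q - 1).factorization p :=
              Finsupp.le_def.mp ((Nat.factorization_le_iff_dvd ht0 hN0).mpr htN) p
            omega
        · -- p divides v
          have hpn₂ : p ∣ n₂ := hpB.trans hvn₂
          have hpd₂ : p ∣ d₂ := hprime_n₂_d₂ p pp hpn₂
          have hpnott : ¬ p ∣ t := by
            intro hcon
            have := Nat.dvd_gcd hpn₂ hcon
            rw [Nat.Coprime.gcd_eq_one hcop2] at this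
            exact pp.one_lt.ne' (Nat.dvd_one.mp this)
          have hpnotd₁ : ¬ p ∣ d₁ := fun hcon => hpnott (hprime_d₁_t p pp hcon)
          have hpnotG : ¬ p ∣ Nat.gcd i d₂ := by
            intro hcon
            have hpi : p ∣ i := hcon.trans (Nat.gcd_dvd_left i d₂)
            have := Nat.dvd_gcd hpi hpB
            rw [Nat.Coprime.gcd_eq_one hiv] at this
            exact pp.one_lt.ne' (Nat.dvd_one.mp this)
          have hfD2 : (d₂ / Nat.gcd i d₂).factorization p = d₂.factorization p := by
            rw [Nat.factorization_div (Nat.gcd_dvd_right i d₂), Finsupp.tsub_apply,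
              Nat.factorization_eq_zero_of_not_dvd hpnotG]
            omega
          refine hBnd ?_ ?_
          · rw [hordc]
            refine Dvd.dvd.mul_left ?_ _
            apply Nat.dvd_of_factorization_pos
            rw [hfD2]
            exact (Nat.Prime.factorization_pos_of_dvd pp hd₂0 hpd₂).ne'
          · intro hcon
            rw [hordc] at hcon
            have he0 : t * d₁ * (d₂ / Nat.gcd i d₂) ≠ 0 :=
              Nat.mul_ne_zero htd₁0 hD20
            have hfle := Finsupp.le_def.mp
              ((Nat.factorization_le_iff_dvd (Nat.mul_ne_zero pp.ne_zero he0) hN0).mpr hcon) p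
            have hexp : (p * (t * d₁ * (d₂ / Nat.gcd i d₂))).factorization p =
                1 + (t.factorization p + d₁.factorization p +
                  (d₂ / Nat.gcd i d₂).factorization p) := by
              rw [Nat.factorization_mul pp.ne_zero he0, Finsupp.add_apply,
                Nat.factorization_mul htd₁0 hD20, Finsupp.add_apply,
                Nat.factorization_mul ht0 hd₁0, Finsupp.add_apply,
                Nat.Prime.factorization_self pp]
            have hft0 : t.factorization p = 0 := Nat.factorization_eq_zero_of_not_dvd hpnott
            have hfd₁0 : d₁.factorization p = 0 := Nat.factorization_eq_zero_of_not_dvd hpnotd₁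
            have hmin : d₂.factorization p =
                min (n₂.factorization p) ((q - 1).factorization p) := by
              rw [hd2, Nat.factorization_gcd hn₂0 hN0, Finsupp.inf_apply]
            have hvle : v.factorization p ≤ (n₂ / d₂).factorization p :=
              Finsupp.le_def.mp ((Nat.factorization_le_iff_dvd hv0 hNd0).mpr ⟨w, hw⟩) p
            have h1 : 1 ≤ v.factorization p :=
              Nat.Prime.factorization_pos_of_dvd pp hv0 hpB
            have hNd : (n₂ / d₂).factorization p =
                n₂.factorization p - d₂.factorization p := by
              rw [Nat.factorization_div hd₂n₂, Finsupp.tsub_apply]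
            omega
      · intro h4m
        have h4n : (4 : ℕ) ∣ n := h4m.trans ⟨(n₂ / v) * d₁, hmn.symm⟩
        rcases h4 with hc4 | hc4
        · exact absurd h4n hc4
        · rw [hF]
          exact hc4
    exact ⟨hmonic, hirr, hii, hordc, hdvdS⟩
  constructor
  · -- the product formula
    rw [← stmt9_triple_prod_eq d₁ d₂ (n₂ / d₂)
      (fun j v i => X ^ ((n₁ / d₁) * v) - C (ζ₂ ^ i * (ζ₁ ^ j * b) ^ (r * v)))]
    set T := (Finset.range d₁ ×ˢ (n₂ / d₂).divisors ×ˢ Finset.range d₂).filter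
      (fun x : ℕ × ℕ × ℕ => Nat.Coprime x.2.2 x.2.1) with hT
    have hmemT : ∀ x ∈ T, x.1 < d₁ ∧ x.2.1 ∈ (n₂ / d₂).divisors ∧ x.2.2 < d₂ ∧
        Nat.Coprime x.2.2 x.2.1 := by
      intro x hx
      rw [hT, Finset.mem_filter, Finset.mem_product, Finset.mem_product] at hx
      exact ⟨Finset.mem_range.mp hx.1.1, hx.1.2.1, Finset.mem_range.mp hx.1.2.2, hx.2⟩
    have hfmonic : ∀ x ∈ T,
        (X ^ ((n₁ / d₁) * x.2.1) - C (ζ₂ ^ x.2.2 * (ζ₁ ^ x.1 * b) ^ (r * x.2.1))).Monic := by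
      intro x hx
      obtain ⟨h1, h2, h3, h4⟩ := hmemT x hx
      exact (key x.1 h1 x.2.1 h2 x.2.2 h3 h4).1
    have hfirr : ∀ x ∈ T,
        Irreducible (X ^ ((n₁ / d₁) * x.2.1) -
          C (ζ₂ ^ x.2.2 * (ζ₁ ^ x.1 * b) ^ (r * x.2.1))) := by
      intro x hx
      obtain ⟨h1, h2, h3, h4⟩ := hmemT x hx
      exact (key x.1 h1 x.2.1 h2 x.2.2 h3 h4).2.1
    have hfdvd : ∀ x ∈ T,
        (X ^ ((n₁ / d₁) * x.2.1) - C (ζ₂ ^ x.2.2 * (ζ₁ ^ x.1 * b) ^ (r * x.2.1))) ∣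
          (X ^ n - C a) := by
      intro x hx
      obtain ⟨h1, h2, h3, h4⟩ := hmemT x hx
      exact (key x.1 h1 x.2.1 h2 x.2.2 h3 h4).2.2.2.2
    have hinj : ∀ x ∈ T, ∀ y ∈ T,
        (X ^ ((n₁ / d₁) * x.2.1) - C (ζ₂ ^ x.2.2 * (ζ₁ ^ x.1 * b) ^ (r * x.2.1))) =
        (X ^ ((n₁ / d₁) * y.2.1) - C (ζ₂ ^ y.2.2 * (ζ₁ ^ y.1 * b) ^ (r * y.2.1))) →
        x = y := by
      rintro ⟨j1, v1, i1⟩ hx ⟨j2, v2, i2⟩ hy hfe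
      obtain ⟨hxj, hxv, hxi, hxc⟩ := hmemT _ hx
      obtain ⟨hyj, hyv, hyi, hyc⟩ := hmemT _ hy
      simp only at hxj hxv hxi hxc hyj hyv hyi hyc hfe
      have hvv : v1 = v2 := by
        have hdeq := congrArg natDegree hfe
        rw [natDegree_X_pow_sub_C, natDegree_X_pow_sub_C] at hdeq
        exact Nat.eq_of_mul_eq_mul_left (Nat.pos_of_ne_zero hn₁d₁0) hdeq
      subst hvv
      have hCeq : C (ζ₂ ^ i1 * (ζ₁ ^ j1 * b) ^ (r * v1)) =
          C (ζ₂ ^ i2 * (ζ₁ ^ j2 * b) ^ (r * v1)) := sub_right_inj.mp hfe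
      have hceq : ζ₂ ^ i1 * (ζ₁ ^ j1 * b) ^ (r * v1) =
          ζ₂ ^ i2 * (ζ₁ ^ j2 * b) ^ (r * v1) := C_injective hCeq
      have hexp : ∀ jj ii : ℕ, ζ₂ ^ ii * (ζ₁ ^ jj * b) ^ (r * v1) =
          (ζ₂ ^ ii * ζ₁ ^ (jj * (r * v1))) * b ^ (r * v1) := by
        intro jj ii
        rw [mul_pow, ← pow_mul, mul_assoc]
      rw [hexp, hexp] at hceq
      have hceq' : ζ₂ ^ i1 * ζ₁ ^ (j1 * (r * v1)) = ζ₂ ^ i2 * ζ₁ ^ (j2 * (r * v1)) :=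
        mul_right_cancel₀ (pow_ne_zero _ hbne) hceq
      have hd₁pow : (ζ₂ ^ i1 * ζ₁ ^ (j1 * (r * v1))) ^ d₁ =
          (ζ₂ ^ i2 * ζ₁ ^ (j2 * (r * v1))) ^ d₁ := by rw [hceq']
      have h0 : ∀ jj ii : ℕ, (ζ₂ ^ ii * ζ₁ ^ (jj * (r * v1))) ^ d₁ = (ζ₂ ^ d₁) ^ ii := by
        intro jj ii
        calc (ζ₂ ^ ii * ζ₁ ^ (jj * (r * v1))) ^ d₁
            = (ζ₂ ^ ii) ^ d₁ * (ζ₁ ^ (jj * (r * v1))) ^ d₁ := mul_pow _ _ _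
        _ = (ζ₂ ^ d₁) ^ ii * (ζ₁ ^ d₁) ^ (jj * (r * v1)) := by
            rw [pow_right_comm ζ₂ ii d₁, pow_right_comm ζ₁ (jj * (r * v1)) d₁]
        _ = (ζ₂ ^ d₁) ^ ii := by rw [hζ1.pow_eq_one, one_pow, mul_one]
      rw [h0, h0] at hd₁pow
      have hprim2 : IsPrimitiveRoot (ζ₂ ^ d₁) d₂ := hζ2.pow_of_coprime d₁ hcop_d₁d₂
      have hi12 : i1 = i2 := hprim2.pow_inj hxi hyi hd₁pow
      subst hi12
      have hz : ζ₁ ^ (j1 * (r * v1)) = ζ₁ ^ (j2 * (r * v1)) :=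
        mul_left_cancel₀ (pow_ne_zero _ hζ₂ne) hceq'
      have hrw : ∀ jj : ℕ, ζ₁ ^ (jj * (r * v1)) = (ζ₁ ^ (r * v1)) ^ jj := by
        intro jj
        rw [← pow_mul, mul_comm]
      rw [hrw, hrw] at hz
      have hvn₂' : v1 ∣ n₂ := (Nat.mem_divisors.mp hxv).1.trans (Nat.div_dvd_of_dvd hd₂n₂)
      have hcop_rv1 : Nat.Coprime (r * v1) d₁ := by
        have h1 : Nat.Coprime (r * v1) (t * d₁) :=
          Nat.Coprime.mul hcop_r (Nat.Coprime.coprime_dvd_left hvn₂' hcop_n₂td₁)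
        exact Nat.Coprime.coprime_dvd_right (dvd_mul_left d₁ t) h1
      have hprim1 : IsPrimitiveRoot (ζ₁ ^ (r * v1)) d₁ := hζ1.pow_of_coprime _ hcop_rv1
      have hj12 : j1 = j2 := hprim1.pow_inj hxj hyj hz
      subst hj12
      rfl
    have hpair : (↑T : Set (ℕ × ℕ × ℕ)).Pairwise
        (Function.onFun (IsCoprime (R := F[X])) (fun x =>
          X ^ ((n₁ / d₁) * x.2.1) - C (ζ₂ ^ x.2.2 * (ζ₁ ^ x.1 * b) ^ (r * x.2.1)))) := by
      intro x hx y hy hxy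
      have hne : (X ^ ((n₁ / d₁) * x.2.1) -
          C (ζ₂ ^ x.2.2 * (ζ₁ ^ x.1 * b) ^ (r * x.2.1))) ≠
          (X ^ ((n₁ / d₁) * y.2.1) - C (ζ₂ ^ y.2.2 * (ζ₁ ^ y.1 * b) ^ (r * y.2.1))) :=
        fun h => hxy (hinj x hx y hy h)
      exact (Irreducible.coprime_iff_not_dvd (hfirr x hx)).mpr
        (fun hdvd => hne (eq_of_monic_of_associated (hfmonic x hx) (hfmonic y hy)
          ((hfirr x hx).associated_of_dvd (hfirr y hy) hdvd)))
    have hPdvd : (∏ x ∈ T, (X ^ ((n₁ / d₁) * x.2.1) -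
        C (ζ₂ ^ x.2.2 * (ζ₁ ^ x.1 * b) ^ (r * x.2.1)))) ∣ (X ^ n - C a) :=
      Finset.prod_dvd_of_coprime hpair hfdvd
    have hPmonic : (∏ x ∈ T, (X ^ ((n₁ / d₁) * x.2.1) -
        C (ζ₂ ^ x.2.2 * (ζ₁ ^ x.1 * b) ^ (r * x.2.1)))).Monic :=
      monic_prod_of_monic _ _ hfmonic
    have hSmonic : (X ^ n - C a : F[X]).Monic := monic_X_pow_sub_C a hn.ne'
    have hdegP : (∏ x ∈ T, (X ^ ((n₁ / d₁) * x.2.1) -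
        C (ζ₂ ^ x.2.2 * (ζ₁ ^ x.1 * b) ^ (r * x.2.1)))).natDegree = n := by
      rw [natDegree_prod_of_monic _ _ hfmonic]
      rw [Finset.sum_congr rfl (fun x _ =>
        (natDegree_X_pow_sub_C : (X ^ ((n₁ / d₁) * x.2.1) -
          C (ζ₂ ^ x.2.2 * (ζ₁ ^ x.1 * b) ^ (r * x.2.1))).natDegree = _))]
      rw [hT, stmt9_triple_sum_eq d₁ d₂ (n₂ / d₂) (fun j v i => (n₁ / d₁) * v)]
      have h2 : ∀ v ∈ (n₂ / d₂).divisors,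
          ∑ i ∈ (Finset.range d₂).filter (fun i => Nat.Coprime i v), (n₁ / d₁) * v =
          (n₁ / d₁) * (d₂ * v.totient) := by
        intro v hv
        rw [Finset.sum_const, smul_eq_mul]
        have hcard := stmt9_card_filter_coprime (d := d₂) (Nat.pos_of_mem_divisors hv).ne'
          (fun p pp hpv => hprime_n₂_d₂ p pp
            (hpv.trans ((Nat.mem_divisors.mp hv).1.trans (Nat.div_dvd_of_dvd hd₂n₂))))
        calc ((Finset.range d₂).filter (fun i => Nat.Coprime i v)).card * ((n₁ / d₁) * v)
            = (n₁ / d₁) * (((Finset.range d₂).filter (fun i => Nat.Coprime i v)).card * v) := by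
              ring
        _ = (n₁ / d₁) * (d₂ * v.totient) := by rw [hcard]
      have h3 : ∑ v ∈ (n₂ / d₂).divisors,
          ∑ i ∈ (Finset.range d₂).filter (fun i => Nat.Coprime i v), (n₁ / d₁) * v =
          (n₁ / d₁) * (d₂ * (n₂ / d₂)) := by
        rw [Finset.sum_congr rfl h2, ← Finset.mul_sum, ← Finset.mul_sum]
        congr 1
        congr 1
        exact Nat.sum_totient _
      rw [Finset.sum_congr rfl (fun j _ => h3), Finset.sum_const, smul_eq_mul,
        Finset.card_range, hn12]
      calc d₁ * ((n₁ / d₁) * (d₂ * (n₂ / d₂))) = (d₁ * (n₁ / d₁)) * (d₂ * (n₂ / d₂)) := by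
            ring
      _ = n₁ * n₂ := by rw [Nat.mul_div_cancel' hd₁n₁, Nat.mul_div_cancel' hd₂n₂]
    exact (eq_of_monic_of_associated hPmonic hSmonic
      (associated_of_dvd_of_natDegree_le hPdvd hSmonic.ne_zero
        (by rw [hdegP, natDegree_X_pow_sub_C]))).symm
  · -- the per-factor facts
    intro j hj v hv i hi
    rw [Finset.mem_filter, Finset.mem_range] at hi
    obtain ⟨hk1, hk2, hk3, hk4, _⟩ :=
      key j (Finset.mem_range.mp hj) v hv i hi.1 hi.2
    exact ⟨hk1, hk2, hk3, hk4⟩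
end

section
/- Let a ∈ F_q^* and let t be a positive integer such that the binomial X^t − a is irreducible over F_q. Then the order of X^t − a equals t · ord(a); equivalently, every root of X^t − a in \overline{F}_q has multiplicative order t · ord(a). -/
open Polynomial

/-- Let `a ∈ F_q^*` and `t` a positive integer such that `X ^ t - a` is
irreducible over `F_q`.  Then the order of `X ^ t - a` (the least positive `e` with
`X ^ t - a ∣ X ^ e - 1`) equals `t * ord a`; equivalently, every root of `X ^ t - a` in
the algebraic closure has multiplicative order `t * ord a`. -/
theorem stmt10 (q : ℕ) (F Ω : Type*) [Field F] [Fintype F]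
    [Field Ω] [Algebra F Ω] [IsAlgClosed Ω]
    (hF : Fintype.card F = q)
    (a : F) (ha : a ≠ 0)
    (t : ℕ) (ht : 0 < t) (hirr : Irreducible (X ^ t - C a)) :
    IsLeast {e : ℕ | 0 < e ∧ (X ^ t - C a : Polynomial F) ∣ X ^ e - 1} (t * orderOf a) ∧
    ∀ b : Ω, b ^ t = algebraMap F Ω a → orderOf b = t * orderOf a := by
  have hm_fin : IsOfFinOrder a := by
    refine isOfFinOrder_iff_pow_eq_one.mpr ⟨Fintype.card F - 1, ?_, ?_⟩
    · have : 1 < Fintype.card F := Fintype.one_lt_card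
      omega
    · exact FiniteField.pow_card_sub_one_eq_one a ha
  set m := orderOf a with hm
  have hmpos : 0 < m := hm_fin.orderOf_pos
  have hinj : Function.Injective (algebraMap F Ω) := (algebraMap F Ω).injective
  have horda' : orderOf (algebraMap F Ω a) = m :=
    orderOf_injective (algebraMap F Ω : F →* Ω) hinj a
  -- key claim: every root has order t * m
  have key : ∀ b : Ω, b ^ t = algebraMap F Ω a → orderOf b = t * m := by
    intro b hb
    have ha' : algebraMap F Ω a ≠ 0 := fun h => ha (hinj (by simpa using h))
    have hb0 : b ≠ 0 := by
      intro h
      apply ha'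
      rw [← hb, h, zero_pow ht.ne']
    have hbtm : b ^ (t * m) = 1 := by
      rw [pow_mul, hb, ← horda', pow_orderOf_eq_one]
    have hb_fin : IsOfFinOrder b :=
      isOfFinOrder_iff_pow_eq_one.mpr ⟨t * m, Nat.mul_pos ht hmpos, hbtm⟩
    set e := orderOf b with he
    have hepos : 0 < e := hb_fin.orderOf_pos
    set d := Nat.gcd e t with hd
    have hdpos : 0 < d := Nat.gcd_pos_of_pos_right e ht
    have hde : d ∣ e := Nat.gcd_dvd_left e t
    have hdt : d ∣ t := Nat.gcd_dvd_right e t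
    have hmd : m = e / d := by
      rw [hd, he]
      have := hb_fin.orderOf_pow (n := t)
      rw [hb, horda'] at this
      omega
    -- Bezout: b ^ d ∈ F
    have hbe : b ^ (e : ℤ) = 1 := by
      rw [zpow_natCast, pow_orderOf_eq_one]
    obtain ⟨u, v, huv⟩ : ∃ u v : ℤ, (d : ℤ) = e * u + t * v :=
      ⟨Nat.gcdA e t, Nat.gcdB e t, Nat.gcd_eq_gcd_ab e t⟩
    have hbd : b ^ (d : ℤ) = algebraMap F Ω (a ^ v) := by
      rw [huv, zpow_add₀ hb0, zpow_mul, zpow_mul, hbe, one_zpow, one_mul,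
        zpow_natCast, hb, map_zpow₀]
    -- so b is a root of X ^ d - C (a ^ v)
    have haev : (aeval b) (X ^ d - C (a ^ v : F)) = 0 := by
      simp only [map_sub, map_pow, aeval_X, aeval_C]
      rw [← zpow_natCast b d, hbd, sub_self]
    have hmonic : (X ^ t - C a : Polynomial F).Monic :=
      monic_X_pow_sub_C a ht.ne'
    have haevt : (aeval b) (X ^ t - C a : Polynomial F) = 0 := by
      simp only [map_sub, map_pow, aeval_X, aeval_C]
      rw [hb, sub_self]
    have hmin : (X ^ t - C a : Polynomial F) = minpoly F b :=
      minpoly.eq_of_irreducible_of_monic hirr haevt hmonic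
    have hdvd : minpoly F b ∣ X ^ d - C (a ^ v : F) := minpoly.dvd F b haev
    have hne : (X ^ d - C (a ^ v : F)) ≠ 0 :=
      (monic_X_pow_sub_C _ hdpos.ne').ne_zero
    have htled : t ≤ d := by
      have := Polynomial.natDegree_le_of_dvd hdvd hne
      rwa [← hmin, natDegree_X_pow_sub_C, natDegree_X_pow_sub_C] at this
    have hdt' : d = t := le_antisymm (Nat.le_of_dvd ht hdt) htled
    rw [hmd, hdt']
    rw [Nat.mul_div_cancel' (hdt' ▸ hde)]
  obtain ⟨b, hb⟩ := IsAlgClosed.exists_root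
    (X ^ t - C (algebraMap F Ω a) : Polynomial Ω) (by
      rw [degree_X_pow_sub_C ht]
      simpa using ht.ne')
  have hb' : b ^ t = algebraMap F Ω a := by
    have h := hb
    simp only [IsRoot, eval_sub, eval_pow, eval_X, eval_C] at h
    exact sub_eq_zero.mp h
  have hmonic : (X ^ t - C a : Polynomial F).Monic := monic_X_pow_sub_C a ht.ne'
  have haevt : (aeval b) (X ^ t - C a : Polynomial F) = 0 := by
    simp only [map_sub, map_pow, aeval_X, aeval_C]
    rw [hb', sub_self]
  have hmin : (X ^ t - C a : Polynomial F) = minpoly F b :=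
    minpoly.eq_of_irreducible_of_monic hirr haevt hmonic
  have hordb : orderOf b = t * m := key b hb'
  refine ⟨⟨⟨Nat.mul_pos ht hmpos, ?_⟩, ?_⟩, key⟩
  · rw [hmin]
    apply minpoly.dvd
    simp only [map_sub, map_pow, aeval_X, map_one]
    rw [← hordb, pow_orderOf_eq_one, sub_self]
  · rintro e ⟨hepos, hdvd⟩
    have haeve : (aeval b) (X ^ e - 1 : Polynomial F) = 0 := by
      obtain ⟨c, hc⟩ := hdvd
      rw [hc, map_mul, haevt, zero_mul]
    simp only [map_sub, map_pow, aeval_X, map_one] at haeve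
    have : b ^ e = 1 := sub_eq_zero.mp haeve
    have := orderOf_dvd_iff_pow_eq_one.mpr this
    rw [hordb] at this
    exact Nat.le_of_dvd hepos this
end

section
/- Let a ∈ F_q^* and let n be a positive integer with rad(n) ∣ ord(a). For s ∈ {1,2} set d^{(s)} := gcd(n, (q^s−1)/ord(a)). Then every root of X^n − a in \overline{F}_q has multiplicative order ord(a)·n and is a proper element of F_{q^k} (i.e. lies in F_{q^k} and in no proper subfield containing F_q), where k = n/d^{(1)} if 4 ∤ n or q ≡ 1 (mod 4), and k = 2n/d^{(2)} otherwise. -/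
open Polynomial


private lemma v2_eq_one {x : ℕ} (h : x % 4 = 2) : padicValNat 2 x = 1 := by
  have h2 : (2:ℕ)^1 ∣ x := by omega
  have h4 : ¬ ((2:ℕ)^2 ∣ x) := by omega
  have hx0 : x ≠ 0 := by omega
  have lo : 1 ≤ padicValNat 2 x := ((padicValNat_dvd_iff 1 x).mp h2).resolve_left hx0
  have hi : ¬ (2 ≤ padicValNat 2 x) := fun hc => h4 ((padicValNat_dvd_iff 2 x).mpr (Or.inr hc))
  omega

private lemma pow_mod4 {q j : ℕ} (h : q % 4 = 3) (hj : Odd j) : q ^ j % 4 = 3 := by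
  obtain ⟨l, rfl⟩ := hj
  have h2 : q ^ 2 % 4 = 1 := by
    rw [Nat.pow_mod, h]
  rw [pow_succ, pow_mul, Nat.mul_mod, Nat.pow_mod, h2]
  simp [h]

private lemma v_odd_prime {p q j : ℕ} [hp : Fact p.Prime] (hp2 : p ≠ 2) (hq : 2 ≤ q)
    (hpq : p ∣ q - 1) (hj : j ≠ 0) :
    padicValNat p (q ^ j - 1) = padicValNat p (q - 1) + padicValNat p j := by
  have hx : ¬ p ∣ q := by
    intro hdq
    have h1 : p ∣ q - (q - 1) := Nat.dvd_sub hdq hpq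
    have : q - (q - 1) = 1 := by omega
    rw [this] at h1
    have := Nat.le_of_dvd (by omega) h1
    have := hp.out.two_le
    omega
  have := padicValNat.pow_sub_pow (x := q) (y := 1) (hp.out.odd_of_ne_two hp2)
    (by omega) (by simpa using hpq) hx hj
  simpa using this

private lemma v2_even {q j : ℕ} (hq : 2 ≤ q) (hodd : ¬ 2 ∣ q) (hj : j ≠ 0) (hje : Even j) :
    padicValNat 2 (q ^ j - 1) + 1
      = padicValNat 2 (q + 1) + padicValNat 2 (q - 1) + padicValNat 2 j := by
  have := padicValNat.pow_two_sub_pow (x := q) (y := 1) (by omega) (by omega) hodd hj hje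
  simpa using this

private lemma v2_q1 {q j : ℕ} (hq : 2 ≤ q) (h4 : q % 4 = 1) (hj : j ≠ 0) :
    padicValNat 2 (q ^ j - 1) = padicValNat 2 (q - 1) + padicValNat 2 j := by
  have h1 : (1:ℕ) ≤ q ^ j := Nat.one_le_pow _ _ (by omega)
  have hqj : 2 ≤ q ^ j := le_trans hq (Nat.le_self_pow hj q)
  have key := Int.two_pow_sub_pow' (x := (q:ℤ)) (y := 1) j (by omega) (by omega)
  rw [one_pow] at key
  have e1 : ((q:ℤ)) ^ j - 1 = ((q ^ j - 1 : ℕ) : ℤ) := by push_cast [h1]; ring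
  have e2 : ((q:ℤ)) - 1 = ((q - 1 : ℕ) : ℤ) := by push_cast [show 1 ≤ q by omega]; ring
  rw [e1, e2] at key
  rw [← Nat.cast_inj (R := ℕ∞), Nat.cast_add, padicValNat_eq_emultiplicity (show q ^ j - 1 ≠ 0 by omega),
    padicValNat_eq_emultiplicity (show q - 1 ≠ 0 by omega),
    padicValNat_eq_emultiplicity hj,
    ← Int.natCast_emultiplicity 2 (q ^ j - 1), ← Int.natCast_emultiplicity 2 (q - 1),
    ← Int.natCast_emultiplicity 2 j]
  exact_mod_cast key

private lemma keyNat (q e n k : ℕ) (hq : 2 ≤ q) (he0 : 0 < e) (hn : 0 < n)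
    (he : e ∣ q - 1) (hrad : ∀ p : ℕ, p.Prime → p ∣ n → p ∣ e)
    (hk : k = if ¬ 4 ∣ n ∨ q % 4 = 1 then n / Nat.gcd n ((q - 1) / e)
              else 2 * n / Nat.gcd n ((q ^ 2 - 1) / e)) :
    ∀ j : ℕ, (e * n ∣ q ^ j - 1 ↔ k ∣ j) := by
  have hq1 : 0 < q - 1 := by omega
  have hsq : q ^ 2 - 1 = (q - 1) * (q + 1) := by
    have h1 : 1 ≤ q ^ 2 := Nat.one_le_pow _ _ (by omega)
    zify [h1, show 1 ≤ q by omega]; ring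
  have he2 : e ∣ q ^ 2 - 1 := he.trans ⟨q + 1, hsq⟩
  have hq2 : 0 < q ^ 2 - 1 := by rw [hsq]; positivity
  have hQ1e : 0 < (q - 1) / e := Nat.div_pos (Nat.le_of_dvd hq1 he) he0
  have hQ2e : 0 < (q ^ 2 - 1) / e := Nat.div_pos (Nat.le_of_dvd hq2 he2) he0
  set g1 := Nat.gcd n ((q - 1) / e) with hg1
  set g2 := Nat.gcd n ((q ^ 2 - 1) / e) with hg2
  have hg1n : g1 ∣ n := Nat.gcd_dvd_left _ _
  have hg2n : g2 ∣ n := Nat.gcd_dvd_left _ _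
  have hg1p : 0 < g1 := Nat.gcd_pos_of_pos_left _ hn
  have hg2p : 0 < g2 := Nat.gcd_pos_of_pos_left _ hn
  have hk0 : 0 < k := by
    rw [hk]; split
    · exact Nat.div_pos (Nat.le_of_dvd hn hg1n) hg1p
    · exact Nat.div_pos (Nat.le_of_dvd (by omega) (hg2n.trans ⟨2, by ring⟩)) hg2p
  -- pointwise factorization helpers
  have fmul : ∀ a b p : ℕ, a ≠ 0 → b ≠ 0 →
      (a * b).factorization p = a.factorization p + b.factorization p := by
    intro a b p ha hb; rw [Nat.factorization_mul ha hb]; rfl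
  have fdiv : ∀ a b p : ℕ, b ∣ a →
      (a / b).factorization p = a.factorization p - b.factorization p := by
    intro a b p hba; rw [Nat.factorization_div hba]; exact Finsupp.tsub_apply _ _ _
  have fgcd : ∀ a b p : ℕ, a ≠ 0 → b ≠ 0 →
      (Nat.gcd a b).factorization p = min (a.factorization p) (b.factorization p) := by
    intro a b p ha hb; rw [Nat.factorization_gcd ha hb]; exact Finsupp.inf_apply _ _ _
  have fle : ∀ a b : ℕ, a ≠ 0 → 0 < b → a ∣ b →
      ∀ p : ℕ, a.factorization p ≤ b.factorization p := by
    intro a b ha hb hab p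
    exact Finsupp.le_def.mp ((Nat.factorization_le_iff_dvd ha hb.ne').mpr hab) p
  intro j
  rcases Nat.eq_zero_or_pos j with rfl | hj
  · simp
  have hqj : 0 < q ^ j - 1 := by
    have : 2 ≤ q ^ j := le_trans hq (Nat.le_self_pow hj.ne' q)
    omega
  rw [← Nat.factorization_le_iff_dvd (by positivity) hqj.ne',
    ← Nat.factorization_le_iff_dvd hk0.ne' hj.ne', Finsupp.le_def, Finsupp.le_def]
  have main : ∀ p : ℕ, p.Prime →
      ((e * n).factorization p ≤ (q ^ j - 1).factorization p ↔
        k.factorization p ≤ j.factorization p) := by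
    intro p hp
    haveI : Fact p.Prime := ⟨hp⟩
    have hen : (e * n).factorization p = e.factorization p + n.factorization p :=
      fmul _ _ _ he0.ne' hn.ne'
    have hBC : e.factorization p ≤ (q - 1).factorization p := fle _ _ he0.ne' hq1 he p
    have hCle : (q - 1).factorization p ≤ (q ^ j - 1).factorization p :=
      fle _ _ hq1.ne' hqj (by simpa using Nat.sub_dvd_pow_sub_pow q 1 j) p
    by_cases hpn : p ∣ n
    case neg =>
      -- p does not divide n : both sides are trivially true
      have hA : n.factorization p = 0 := Nat.factorization_eq_zero_of_not_dvd hpn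
      have hkp : k.factorization p = 0 := by
        rw [hk]; split
        · have hkd : n / g1 ∣ n := Nat.div_dvd_of_dvd hg1n
          have := fle _ _ (Nat.div_pos (Nat.le_of_dvd hn hg1n) hg1p).ne' hn hkd p
          omega
        · rename_i hcond
          push_neg at hcond
          obtain ⟨h4n, -⟩ := hcond
          have hp2 : p ≠ 2 := by rintro rfl; exact hpn (dvd_trans ⟨2, rfl⟩ h4n)
          have hkd : 2 * n / g2 ∣ 2 * n := Nat.div_dvd_of_dvd (hg2n.trans ⟨2, by ring⟩)
          have h2n : (2 * n).factorization p = 0 := by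
            rw [fmul _ _ _ two_ne_zero hn.ne', hA,
              Nat.factorization_eq_zero_of_not_dvd
                (fun hd => hp2 ((Nat.prime_dvd_prime_iff_eq hp Nat.prime_two).mp hd))]
          have := fle _ _ (Nat.div_pos (Nat.le_of_dvd (by omega) (hg2n.trans ⟨2, by ring⟩))
            hg2p).ne' (by omega) hkd p
          omega
      rw [hen, hA, hkp]
      constructor
      · intro _; exact Nat.zero_le _
      · intro _; exact le_trans (by omega) hCle
    case pos =>
      have hpe : p ∣ e := hrad p hp hpn
      have hpq1 : p ∣ q - 1 := hpe.trans he
      have hB1 : 0 < e.factorization p := hp.factorization_pos_of_dvd he0.ne' hpe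
      -- value of k's factorization in branch-1 form
      have hvg1 : g1.factorization p
          = min (n.factorization p) ((q - 1).factorization p - e.factorization p) := by
        rw [hg1, fgcd _ _ _ hn.ne' hQ1e.ne', fdiv _ _ _ he]
      by_cases hp2 : p = 2
      case neg =>
        -- odd prime dividing n
        have hfq : Nat.factorization (q ^ j - 1) p
            = (q - 1).factorization p + j.factorization p := by
          rw [Nat.factorization_def _ hp, Nat.factorization_def _ hp, Nat.factorization_def _ hp]
          exact v_odd_prime hp2 hq hpq1 hj.ne'
        have hq21 : (q ^ 2 - 1).factorization p = (q - 1).factorization p := by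
          have hpq1' : ¬ p ∣ q + 1 := by
            intro hd
            have : p ∣ (q + 1) - (q - 1) := Nat.dvd_sub hd hpq1
            have h2 : (q + 1) - (q - 1) = 2 := by omega
            rw [h2] at this
            exact hp2 ((Nat.prime_dvd_prime_iff_eq hp Nat.prime_two).mp this)
          rw [hsq, fmul _ _ _ hq1.ne' (by omega),
            Nat.factorization_eq_zero_of_not_dvd hpq1']
          omega
        have hkp : k.factorization p
            = n.factorization p
              - min (n.factorization p) ((q - 1).factorization p - e.factorization p) := by
          rw [hk]; split
          · rw [fdiv _ _ _ hg1n, hvg1]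
          · rw [fdiv _ _ _ (hg2n.trans ⟨2, by ring⟩), fmul _ _ _ two_ne_zero hn.ne',
              hg2, fgcd _ _ _ hn.ne' hQ2e.ne', fdiv _ _ _ he2, hq21,
              Nat.factorization_eq_zero_of_not_dvd
                (fun hd => hp2 ((Nat.prime_dvd_prime_iff_eq hp Nat.prime_two).mp hd))]
            omega
        rw [hen, hfq, hkp]
        omega
      case pos =>
        subst hp2
        -- p = 2, 2 ∣ n, hence q odd
        have h2e : (2:ℕ) ∣ e := hpe
        have hqodd : ¬ 2 ∣ q := by
          have : (2:ℕ) ∣ q - 1 := hpq1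
          omega
        have hq4 : q % 4 = 1 ∨ q % 4 = 3 := by omega
        rcases hq4 with hq4 | hq4
        · -- q ≡ 1 mod 4 : branch 1
          have hfq : Nat.factorization (q ^ j - 1) 2
              = (q - 1).factorization 2 + j.factorization 2 := by
            rw [Nat.factorization_def _ Nat.prime_two, Nat.factorization_def _ Nat.prime_two,
              Nat.factorization_def _ Nat.prime_two]
            exact v2_q1 hq hq4 hj.ne'
          have hkp : k.factorization 2
              = n.factorization 2
                - min (n.factorization 2) ((q - 1).factorization 2 - e.factorization 2) := by
            rw [hk, if_pos (Or.inr hq4), fdiv _ _ _ hg1n, hvg1]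
          rw [hen, hfq, hkp]
          omega
        · -- q ≡ 3 mod 4
          have hC1 : (q - 1).factorization 2 = 1 := by
            rw [Nat.factorization_def _ Nat.prime_two]
            exact v2_eq_one (by omega)
          have hB : e.factorization 2 = 1 := by omega
          have hvq1 : 2 ≤ (q + 1).factorization 2 := by
            have h4 : (2:ℕ)^2 ∣ q + 1 := by omega
            exact (Nat.Prime.pow_dvd_iff_le_factorization Nat.prime_two (by omega)).mp h4
          have hD : (q ^ 2 - 1).factorization 2 = 1 + (q + 1).factorization 2 := by
            rw [hsq, fmul _ _ _ hq1.ne' (by omega), hC1]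
          -- parity of j determines the valuation of q^j - 1
          by_cases hje : 2 ∣ j
          · -- j even
            have hJ1 : 0 < j.factorization 2 :=
              Nat.prime_two.factorization_pos_of_dvd hj.ne' hje
            have hfq : Nat.factorization (q ^ j - 1) 2 + 1
                = (q + 1).factorization 2 + 1 + j.factorization 2 := by
              have hC1' : padicValNat 2 (q - 1) = 1 := by
                rw [← Nat.factorization_def _ Nat.prime_two]; exact hC1
              have hv := v2_even hq hqodd hj.ne' (even_iff_two_dvd.mpr hje)
              rw [hC1'] at hv
              rw [Nat.factorization_def _ Nat.prime_two, Nat.factorization_def _ Nat.prime_two,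
                Nat.factorization_def _ Nat.prime_two]
              omega
            by_cases h4n : 4 ∣ n
            · -- k = 2n/g2
              have hA2 : 2 ≤ n.factorization 2 :=
                (Nat.Prime.pow_dvd_iff_le_factorization Nat.prime_two hn.ne').mp (by omega)
              have hkp : k.factorization 2
                  = 1 + n.factorization 2
                    - min (n.factorization 2) ((q + 1).factorization 2) := by
                rw [hk, if_neg (by push_neg; exact ⟨h4n, by omega⟩),
                  fdiv _ _ _ (hg2n.trans ⟨2, by ring⟩), fmul _ _ _ two_ne_zero hn.ne',
                  hg2, fgcd _ _ _ hn.ne' hQ2e.ne', fdiv _ _ _ he2, hD, hB,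
                  Nat.prime_two.factorization_self]
                omega
              rw [hen, hB, hkp]
              omega
            · -- ¬ 4 ∣ n : k = n / g1, and v2 n = 1
              have hA1 : n.factorization 2 = 1 := by
                have hlo : 0 < n.factorization 2 :=
                  Nat.prime_two.factorization_pos_of_dvd hn.ne' hpn
                have hhi : ¬ (2 ≤ n.factorization 2) := fun hc =>
                  h4n ((Nat.Prime.pow_dvd_iff_le_factorization Nat.prime_two hn.ne').mpr hc)
                omega
              have hkp : k.factorization 2 = 1 := by
                rw [hk, if_pos (Or.inl h4n), fdiv _ _ _ hg1n, hvg1, hA1, hC1, hB]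
                omega
              rw [hen, hB, hkp, hA1]
              omega
          · -- j odd
            have hJ0 : j.factorization 2 = 0 := Nat.factorization_eq_zero_of_not_dvd hje
            have hfq : Nat.factorization (q ^ j - 1) 2 = 1 := by
              rw [Nat.factorization_def _ Nat.prime_two]
              exact v2_eq_one (by have := pow_mod4 hq4 (Nat.odd_iff.mpr (show j % 2 = 1 by omega)); omega)
            have hA1 : 0 < n.factorization 2 :=
              Nat.prime_two.factorization_pos_of_dvd hn.ne' hpn
            have hkpos : 0 < k.factorization 2 := by
              rw [hk]; split
              · rename_i hcond
                rw [fdiv _ _ _ hg1n, hvg1, hC1, hB]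
                omega
              · rw [fdiv _ _ _ (hg2n.trans ⟨2, by ring⟩), fmul _ _ _ two_ne_zero hn.ne',
                  hg2, fgcd _ _ _ hn.ne' hQ2e.ne', fdiv _ _ _ he2, hD, hB,
                  Nat.prime_two.factorization_self]
                omega
            rw [hen, hfq, hB]
            omega
  constructor
  · intro H p
    by_cases hp : p.Prime
    · exact (main p hp).mp (H p)
    · simp [Nat.factorization_eq_zero_of_not_prime _ hp]
  · intro H p
    by_cases hp : p.Prime
    · exact (main p hp).mpr (H p)
    · simp [Nat.factorization_eq_zero_of_not_prime _ hp]

open IntermediateField in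
/-- Let `a ∈ F_q^*` and `n` a positive integer with `rad n ∣ ord a`.
For `s ∈ {1, 2}` set `d⁽ˢ⁾ := gcd(n, (q^s - 1)/ord a)`.  Then every root of `X ^ n - a`
in the algebraic closure has multiplicative order `ord a * n` and is a proper element of
`F_{q^k}` (its minimal polynomial over `F_q` has degree `k`), where `k = n / d⁽¹⁾` if
`4 ∤ n` or `q ≡ 1 (mod 4)`, and `k = 2 n / d⁽²⁾` otherwise. -/
theorem stmt12 (q : ℕ) (F Ω : Type*) [Field F] [Fintype F]
    [Field Ω] [Algebra F Ω] [IsAlgClosed Ω]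
    (hF : Fintype.card F = q)
    (a : F) (ha : a ≠ 0)
    (n : ℕ) (hn : 0 < n) (hrad : (∏ p ∈ n.primeFactors, p) ∣ orderOf a)
    (d₁ d₂ : ℕ) (hd1 : d₁ = Nat.gcd n ((q - 1) / orderOf a))
    (hd2 : d₂ = Nat.gcd n ((q ^ 2 - 1) / orderOf a))
    (k : ℕ) (hk : k = if ¬ 4 ∣ n ∨ q % 4 = 1 then n / d₁ else 2 * n / d₂) :
    ∀ b : Ω, b ^ n = algebraMap F Ω a →
      orderOf b = orderOf a * n ∧ (minpoly F b).natDegree = k := by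
  classical
  intro b hb
  set e := orderOf a with he_def
  have hq2 : 2 ≤ q := hF ▸ Fintype.one_lt_card
  have hinj : Function.Injective (algebraMap F Ω) := (algebraMap F Ω).injective
  have he' : orderOf (algebraMap F Ω a) = e :=
    orderOf_injective (algebraMap F Ω : F →* Ω) hinj a
  set u : Fˣ := Units.mk0 a ha with hu
  have hue : orderOf a = orderOf u := by rw [← orderOf_units]; rfl
  have he0 : 0 < e := by rw [he_def, hue]; exact orderOf_pos u
  have he_dvd : e ∣ q - 1 := by
    rw [he_def, hue, ← hF, ← Fintype.card_units]
    exact orderOf_dvd_card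
  have hrad' : ∀ p : ℕ, p.Prime → p ∣ n → p ∣ e := by
    intro p hp hpn
    exact dvd_trans (Finset.dvd_prod_of_mem _root_.id
      (Nat.mem_primeFactors.mpr ⟨hp, hpn, hn.ne'⟩)) hrad
  -- part 1 : order of b
  have hb0 : b ≠ 0 := by
    intro h
    rw [h, zero_pow hn.ne'] at hb
    exact ha (hinj (by simpa using hb.symm))
  have hfin : IsOfFinOrder b := by
    refine isOfFinOrder_iff_pow_eq_one.mpr ⟨n * e, by positivity, ?_⟩
    rw [pow_mul, hb, ← he', pow_orderOf_eq_one]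
  have ht0 : 0 < orderOf b := hfin.orderOf_pos
  have htg : orderOf b = (orderOf b).gcd n * e := by
    have h1 : orderOf (b ^ n) = orderOf b / (orderOf b).gcd n := orderOf_pow' b hn.ne'
    rw [hb, he'] at h1
    exact Nat.eq_mul_of_div_eq_right (Nat.gcd_dvd_left _ n) h1.symm
  have hnt : n ∣ orderOf b := by
    rw [← Nat.factorization_le_iff_dvd hn.ne' ht0.ne', Finsupp.le_def]
    intro p
    by_cases hp : p.Prime
    · by_cases hpn : p ∣ n
      · have hpe : p ∣ e := hrad' p hp hpn
        have hB1 : 0 < e.factorization p := hp.factorization_pos_of_dvd he0.ne' hpe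
        have hgp : 0 < (orderOf b).gcd n := Nat.gcd_pos_of_pos_left n ht0
        have h2 : (orderOf b).factorization p
            = min ((orderOf b).factorization p) (n.factorization p) + e.factorization p := by
          conv_lhs => rw [htg]
          rw [Nat.factorization_mul hgp.ne' he0.ne', Nat.factorization_gcd ht0.ne' hn.ne']
          rfl
        omega
      · simp [Nat.factorization_eq_zero_of_not_dvd hpn]
    · simp [Nat.factorization_eq_zero_of_not_prime _ hp]
  have hten : orderOf b = e * n := by
    rw [htg, Nat.gcd_eq_right hnt]
    exact Nat.mul_comm n e
  refine ⟨hten, ?_⟩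
  -- part 2 : degree of the minimal polynomial
  have hb1 : b ^ (e * n) = 1 := by rw [← hten]; exact pow_orderOf_eq_one b
  have hbInt : IsIntegral F b := by
    refine ⟨X ^ (e * n) - C 1, monic_X_pow_sub_C 1 (by positivity), ?_⟩
    simp [hb1]
  set d := (minpoly F b).natDegree with hd_def
  have hd0 : 0 < d := minpoly.natDegree_pos hbInt
  haveI : FiniteDimensional F F⟮b⟯ := IntermediateField.adjoin.finiteDimensional hbInt
  haveI : Finite (F⟮b⟯) := Module.finite_of_finite F
  letI : Fintype (F⟮b⟯) := Fintype.ofFinite _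
  have hcard : Fintype.card F⟮b⟯ = q ^ d := by
    rw [Module.card_eq_pow_finrank (K := F) (V := F⟮b⟯), hF, IntermediateField.adjoin.finrank hbInt]
  -- (β) e*n divides q^d - 1
  have hpow_d : b ^ q ^ d = b := by
    have h1 := FiniteField.pow_card (⟨b, mem_adjoin_simple_self F b⟩ : F⟮b⟯)
    rw [hcard] at h1
    have h2 := congrArg (fun x : F⟮b⟯ => (x : Ω)) h1
    simpa using h2
  have hdvd_d : e * n ∣ q ^ d - 1 := by
    rw [← hten]
    apply orderOf_dvd_of_pow_eq_one
    have hq1 : 1 ≤ q ^ d := Nat.one_le_pow _ _ (by omega)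
    have h2 : b ^ (q ^ d - 1) * b = 1 * b := by
      rw [← pow_succ, Nat.sub_add_cancel hq1, hpow_d, one_mul]
    exact mul_right_cancel₀ hb0 h2
  -- the key arithmetic lemma
  have key := keyNat q e n k hq2 he0 hn he_dvd hrad' (by rw [hk, hd1, hd2])
  have hkd : k ∣ d := (key d).mp hdvd_d
  have hk0 : 0 < k := Nat.pos_of_ne_zero (by rintro rfl; exact hd0.ne' (Nat.eq_zero_of_zero_dvd hkd))
  have hkled : k ≤ d := Nat.le_of_dvd hd0 hkd
  -- (α) d ≤ k by counting roots of X^(q^k) - X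
  have hdvd_k : e * n ∣ q ^ k - 1 := (key k).mpr dvd_rfl
  have hqk1 : 1 < q ^ k := Nat.one_lt_pow hk0.ne' (by omega)
  have hpow_k : b ^ q ^ k = b := by
    have h1 : b ^ (q ^ k - 1) = 1 :=
      orderOf_dvd_iff_pow_eq_one.mp (by rw [hten]; exact hdvd_k)
    calc b ^ q ^ k = b ^ (q ^ k - 1) * b := by rw [← pow_succ, Nat.sub_add_cancel (by omega)]
    _ = b := by rw [h1, one_mul]
  -- char p structure
  set p := ringChar F with hp_def
  obtain ⟨f, hpp, hcardF⟩ := FiniteField.card F p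
  have hqpf : q = p ^ (f : ℕ) := by rw [← hF, hcardF]
  haveI : Fact p.Prime := ⟨hpp⟩
  haveI : CharP Ω p := charP_of_injective_algebraMap hinj p
  have hqk_pf : q ^ k = p ^ ((f : ℕ) * k) := by rw [hqpf, ← pow_mul]
  have hfix : ∀ x : Ω, x ∈ F⟮b⟯ → x ^ q ^ k = x := by
    intro x hx
    induction hx using IntermediateField.adjoin_induction with
    | mem x hx => rw [Set.mem_singleton_iff] at hx; rw [hx]; exact hpow_k
    | algebraMap c =>
        rw [← map_pow, ← hF, FiniteField.pow_card_pow]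
    | add x y hx hy ihx ihy => rw [hqk_pf] at ihx ihy ⊢; rw [add_pow_char_pow, ihx, ihy]
    | inv x hx ihx => rw [inv_pow, ihx]
    | mul x y hx hy ihx ihy => rw [mul_pow, ihx, ihy]
  have hdlek : d ≤ k := by
    set P : Polynomial Ω := X ^ q ^ k - X with hP
    have hP0 : P ≠ 0 := FiniteField.X_pow_card_sub_X_ne_zero Ω hqk1
    have hPdeg : P.natDegree = q ^ k := FiniteField.X_pow_card_sub_X_natDegree_eq Ω hqk1
    have hsub : Finset.univ.image (Subtype.val : F⟮b⟯ → Ω) ⊆ P.roots.toFinset := by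
      intro x hx
      obtain ⟨y, -, hyx⟩ := Finset.mem_image.mp hx
      have hxmem : x ∈ F⟮b⟯ := hyx ▸ y.2
      rw [Multiset.mem_toFinset, mem_roots hP0]
      simp only [hP, IsRoot.def, eval_sub, eval_pow, eval_X]
      rw [hfix x hxmem, sub_self]
    have hcount : q ^ d ≤ q ^ k := by
      calc q ^ d = Fintype.card F⟮b⟯ := hcard.symm
      _ = (Finset.univ.image (Subtype.val : F⟮b⟯ → Ω)).card := by
          rw [Finset.card_image_of_injective Finset.univ Subtype.val_injective,
            Finset.card_univ]
      _ ≤ P.roots.toFinset.card := Finset.card_le_card hsub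
      _ ≤ Multiset.card P.roots := Multiset.toFinset_card_le _
      _ ≤ P.natDegree := card_roots' P
      _ = q ^ k := hPdeg
    exact (Nat.pow_le_pow_iff_right (by omega)).mp hcount
  omega
end
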